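/- arXiv:quant-ph/0011019 — 11 statements merged into one kernel-verified Lean document; each statement's English description precedes it below -/
import Mathlib

section
/- Let V be a finite-dimensional complex inner product space with orthonormal basis w_1, …, w_N, let 1 ≤ l < N, let E be a nonzero real number, and let β_1, …, β_N be nonnegative reals with ∑_{i=1}^N β_i² = 1. Set y = (∑_{i=1}^l β_i²)^{1/2} and assume 0 < y < 1. Define w̃ = (1/y)·∑_{i=1}^l β_i w_i, r = (1/√(1−y²))·∑_{i=l+1}^N β_i w_i, s = ∑_{i=1}^N β_i w_i, and the linear operator H = E·∑_{i=1}^l |w_i⟩⟨w_i| + E·|s⟩⟨s|. Then H w̃ = E·((1+y²)·w̃ + y·√(1−y²)·r) and H r = E·(y·√(1−y²)·w̃ + (1−y²)·r); in particular the two-dimensional subspace spanned by w̃ and r is invariant under H, on which H has the matrix representation E·!![1+y², y√(1−y²); y√(1−y²), 1−y²]. -/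
open Finset

/-- **Theorem 2.1(1)** of Chen–Diao: the search Hamiltonian
`H = E ∑_{i<l} |wᵢ⟩⟨wᵢ| + E |s⟩⟨s|` leaves the plane `span{w̃, r}` invariant,
acting on it by the matrix `E·!![1+y², y√(1−y²); y√(1−y²), 1−y²]`. -/
theorem multiobject_hamiltonian_invariant_plane
    {V : Type*} [NormedAddCommGroup V] [InnerProductSpace ℂ V] [FiniteDimensional ℂ V]
    {N l : ℕ} (hl : 1 ≤ l) (hlN : l < N)
    (w : Fin N → V) (hw : Orthonormal ℂ w)
    (E : ℝ) (hE : E ≠ 0)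
    (β : Fin N → ℝ) (hβ : ∀ i, 0 ≤ β i)
    (hβsum : ∑ i, (β i) ^ 2 = 1)
    (y : ℝ)
    (hy : y = Real.sqrt (∑ i ∈ univ.filter (fun i : Fin N => (i : ℕ) < l), (β i) ^ 2))
    (hy0 : 0 < y) (hy1 : y < 1)
    (wt r s : V)
    (hwt : wt = (1 / (y : ℂ)) •
        ∑ i ∈ univ.filter (fun i : Fin N => (i : ℕ) < l), (β i : ℂ) • w i)
    (hr : r = (1 / (Real.sqrt (1 - y ^ 2) : ℂ)) •
        ∑ i ∈ univ.filter (fun i : Fin N => l ≤ (i : ℕ)), (β i : ℂ) • w i)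
    (hs : s = ∑ i, (β i : ℂ) • w i)
    (H : V →ₗ[ℂ] V)
    (hH : ∀ v, H v =
        (E : ℂ) • (∑ i ∈ univ.filter (fun i : Fin N => (i : ℕ) < l),
            (inner ℂ (w i) v : ℂ) • w i)
          + (E : ℂ) • (inner ℂ s v : ℂ) • s) :
    H wt = (E : ℂ) • (((1 + y ^ 2 : ℝ) : ℂ) • wt
        + ((y * Real.sqrt (1 - y ^ 2) : ℝ) : ℂ) • r) ∧
    H r = (E : ℂ) • (((y * Real.sqrt (1 - y ^ 2) : ℝ) : ℂ) • wt
        + ((1 - y ^ 2 : ℝ) : ℂ) • r) ∧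
    ∀ v ∈ Submodule.span ℂ ({wt, r} : Set V),
      H v ∈ Submodule.span ℂ ({wt, r} : Set V) := by
  set A : Finset (Fin N) := univ.filter (fun i : Fin N => (i : ℕ) < l) with hA
  set B : Finset (Fin N) := univ.filter (fun i : Fin N => l ≤ (i : ℕ)) with hB
  have hwij : ∀ i j, (inner ℂ (w i) (w j) : ℂ) = if i = j then 1 else 0 :=
    orthonormal_iff_ite.mp hw
  have key : ∀ (c : Fin N → ℂ) (t : Finset (Fin N)) (i : Fin N),
      (inner ℂ (w i) (∑ j ∈ t, c j • w j) : ℂ) = if i ∈ t then c i else 0 := by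
    intro c t i
    rw [inner_sum]
    simp only [inner_smul_right, hwij, mul_ite, mul_one, mul_zero]
    exact Finset.sum_ite_eq t i c
  have hy2pos : (0:ℝ) < 1 - y ^ 2 := by nlinarith
  have hsq : Real.sqrt (1 - y ^ 2) > 0 := Real.sqrt_pos.mpr hy2pos
  have hsq2 : Real.sqrt (1 - y ^ 2) ^ 2 = 1 - y ^ 2 := Real.sq_sqrt hy2pos.le
  have hyC : (y : ℂ) ≠ 0 := by exact_mod_cast hy0.ne'
  have hsqC : ((Real.sqrt (1 - y ^ 2) : ℝ) : ℂ) ≠ 0 := by exact_mod_cast hsq.ne'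
  have hy2 : y ^ 2 = ∑ i ∈ A, β i ^ 2 := by
    rw [hy]; exact Real.sq_sqrt (Finset.sum_nonneg fun i _ => sq_nonneg _)
  have hBeq : B = univ.filter (fun i : Fin N => ¬ ((i : ℕ) < l)) := by
    simp [hB, not_lt]
  have hsplit : ∀ f : Fin N → V, ∑ i ∈ A, f i + ∑ i ∈ B, f i = ∑ i, f i := by
    intro f; rw [hBeq, hA, Finset.sum_filter_add_sum_filter_not]
  have hsplitR : ∀ f : Fin N → ℝ, ∑ i ∈ A, f i + ∑ i ∈ B, f i = ∑ i, f i := by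
    intro f; rw [hBeq, hA, Finset.sum_filter_add_sum_filter_not]
  have hBsum : ∑ i ∈ B, β i ^ 2 = 1 - y ^ 2 := by
    have := hsplitR (fun i => β i ^ 2)
    rw [hβsum] at this; linarith [hy2]
  have hwtA : (y : ℂ) • wt = ∑ i ∈ A, (β i : ℂ) • w i := by
    rw [hwt, smul_smul, mul_one_div, div_self hyC, one_smul]
  have hrB : ((Real.sqrt (1 - y ^ 2) : ℝ) : ℂ) • r = ∑ i ∈ B, (β i : ℂ) • w i := by
    rw [hr, smul_smul, mul_one_div, div_self hsqC, one_smul]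
  have hsWR : s = (y : ℂ) • wt + ((Real.sqrt (1 - y ^ 2) : ℝ) : ℂ) • r := by
    rw [hwtA, hrB, hs, hsplit]
  -- projections onto target subspace
  have hT1wt : ∑ i ∈ A, (inner ℂ (w i) wt : ℂ) • w i = wt := by
    have : ∀ i ∈ A, (inner ℂ (w i) wt : ℂ) • w i = ((1 / (y:ℂ)) * (β i : ℂ)) • w i := by
      intro i hi
      rw [hwt, inner_smul_right, key]
      simp [hi]
    rw [Finset.sum_congr rfl this]
    simp only [mul_smul, ← Finset.smul_sum]
    rw [← hwt]
  have hT1r : ∑ i ∈ A, (inner ℂ (w i) r : ℂ) • w i = 0 := by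
    apply Finset.sum_eq_zero
    intro i hi
    have hiB : i ∉ B := by
      simp only [hA, Finset.mem_filter] at hi
      simp [hB, not_le, hi.2]
    rw [hr, inner_smul_right, key]
    simp [hiB]
  -- inner products with s
  have hconj : ∀ x : ℝ, (starRingEnd ℂ) (x : ℂ) = (x : ℂ) := fun x => Complex.conj_ofReal x
  have hswt : (inner ℂ s wt : ℂ) = (y : ℂ) := by
    rw [hs, sum_inner]
    have h1 : ∀ j, (inner ℂ ((β j : ℂ) • w j) wt : ℂ)
        = if j ∈ A then (β j : ℂ) * ((1 / (y:ℂ)) * (β j : ℂ)) else 0 := by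
      intro j
      rw [inner_smul_left, hconj, hwt, inner_smul_right, key]
      simp [mul_ite]
    simp only [h1]
    rw [Finset.sum_ite_mem, Finset.univ_inter]
    have : ∑ j ∈ A, (β j : ℂ) * ((1 / (y:ℂ)) * (β j : ℂ))
        = (1 / (y:ℂ)) * ∑ j ∈ A, ((β j : ℝ) ^ 2 : ℂ) := by
      rw [Finset.mul_sum]; congr 1; ext j; push_cast; ring
    rw [this]
    have hcast : (∑ j ∈ A, ((β j : ℂ)) ^ 2) = ((y:ℂ))^2 := by
      rw [show ((y:ℂ))^2 = ((y^2 : ℝ) : ℂ) by push_cast; ring, hy2]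
      push_cast; rfl
    rw [hcast]
    field_simp
  have hsr : (inner ℂ s r : ℂ) = ((Real.sqrt (1 - y ^ 2) : ℝ) : ℂ) := by
    rw [hs, sum_inner]
    have h1 : ∀ j, (inner ℂ ((β j : ℂ) • w j) r : ℂ)
        = if j ∈ B then (β j : ℂ) * ((1 / ((Real.sqrt (1 - y ^ 2) : ℝ) : ℂ)) * (β j : ℂ)) else 0 := by
      intro j
      rw [inner_smul_left, hconj, hr, inner_smul_right, key]
      simp [mul_ite]
    simp only [h1]
    rw [Finset.sum_ite_mem, Finset.univ_inter]
    have : ∑ j ∈ B, (β j : ℂ) * ((1 / ((Real.sqrt (1 - y ^ 2) : ℝ) : ℂ)) * (β j : ℂ))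
        = (1 / ((Real.sqrt (1 - y ^ 2) : ℝ) : ℂ)) * ∑ j ∈ B, ((β j : ℝ) ^ 2 : ℂ) := by
      rw [Finset.mul_sum]; congr 1; ext j; push_cast; ring
    rw [this]
    have hcast : (∑ j ∈ B, ((β j : ℂ)) ^ 2) = ((Real.sqrt (1 - y ^ 2) : ℝ) : ℂ) ^ 2 := by
      rw [show ((Real.sqrt (1 - y ^ 2) : ℝ):ℂ)^2 = ((Real.sqrt (1 - y ^ 2)^2 : ℝ) : ℂ) by push_cast; ring,
        hsq2, ← hBsum]
      push_cast; rfl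
    rw [hcast]
    field_simp
  -- the two formulas
  have hHwt : H wt = (E : ℂ) • (((1 + y ^ 2 : ℝ) : ℂ) • wt
      + ((y * Real.sqrt (1 - y ^ 2) : ℝ) : ℂ) • r) := by
    rw [hH, hT1wt, hswt, hsWR]
    push_cast
    module
  have hHr : H r = (E : ℂ) • (((y * Real.sqrt (1 - y ^ 2) : ℝ) : ℂ) • wt
      + ((1 - y ^ 2 : ℝ) : ℂ) • r) := by
    rw [hH, hT1r, hsr, hsWR]
    have h2 : ((1 - y ^ 2 : ℝ) : ℂ) = ((Real.sqrt (1 - y ^ 2) : ℝ) : ℂ) ^ 2 := by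
      rw [← Complex.ofReal_pow, hsq2]
    rw [h2]
    push_cast
    module
  refine ⟨hHwt, hHr, ?_⟩
  intro v hv
  have hwtmem : wt ∈ Submodule.span ℂ ({wt, r} : Set V) :=
    Submodule.subset_span (by simp)
  have hrmem : r ∈ Submodule.span ℂ ({wt, r} : Set V) :=
    Submodule.subset_span (by simp)
  induction hv using Submodule.span_induction with
  | mem x hx =>
    rcases hx with hx | hx
    · rw [hx, hHwt]
      exact Submodule.smul_mem _ _ (Submodule.add_mem _ (Submodule.smul_mem _ _ hwtmem)
        (Submodule.smul_mem _ _ hrmem))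
    · rw [Set.mem_singleton_iff.mp hx, hHr]
      exact Submodule.smul_mem _ _ (Submodule.add_mem _ (Submodule.smul_mem _ _ hwtmem)
        (Submodule.smul_mem _ _ hrmem))
  | zero => simp
  | add x y _ _ hx hy => rw [map_add]; exact Submodule.add_mem _ hx hy
  | smul c x _ hx => rw [map_smul]; exact Submodule.smul_mem _ _ hx
end

section
/- Let E, t, y be real numbers with 0 ≤ y ≤ 1, and let M(E,y) be the 2×2 complex matrix E·!![1+y², y·√(1−y²); y·√(1−y²), 1−y²]. Then the matrix exponential exp(−i·t·M(E,y)) equals e^{−iEt}·!![cos(Eyt) − i·y·sin(Eyt), −√(1−y²)·i·sin(Eyt); −√(1−y²)·i·sin(Eyt), cos(Eyt) + i·y·sin(Eyt)]. -/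
open Matrix

/-- The matrix representation of the search Hamiltonian on its invariant plane. -/
noncomputable def searchHamiltonianMatrix (E y : ℝ) : Matrix (Fin 2) (Fin 2) ℂ :=
  (E : ℂ) • !![((1 + y ^ 2 : ℝ) : ℂ), ((y * Real.sqrt (1 - y ^ 2) : ℝ) : ℂ);
               ((y * Real.sqrt (1 - y ^ 2) : ℝ) : ℂ), ((1 - y ^ 2 : ℝ) : ℂ)]

lemma exp_smul_of_sq_eq_one (d : ℂ) (A : Matrix (Fin 2) (Fin 2) ℂ) (hA : A * A = 1) :
    NormedSpace.exp (d • A) =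
      Complex.cosh d • (1 : Matrix (Fin 2) (Fin 2) ℂ) + Complex.sinh d • A := by
  have hA2 : A ^ 2 = 1 := by rw [sq, hA]
  have hAe : ∀ n : ℕ, A ^ (2 * n) = 1 := fun n => by rw [pow_mul, hA2, one_pow]
  have hAo : ∀ n : ℕ, A ^ (2 * n + 1) = A := fun n => by
    rw [pow_succ, hAe, one_mul]
  rw [NormedSpace.exp_eq_tsum (𝕂 := ℂ)]
  refine HasSum.tsum_eq ?_
  refine HasSum.even_add_odd ?_ ?_
  · have h := (Complex.hasSum_cosh d).smul_const (1 : Matrix (Fin 2) (Fin 2) ℂ)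
    convert h using 2 with n
    case e'_3 => rfl
    rw [smul_pow, hAe, smul_smul]
    congr 1
    field_simp
  · have h := (Complex.hasSum_sinh d).smul_const A
    convert h using 2 with n
    case e'_3 => rfl
    rw [smul_pow, hAo, smul_smul]
    congr 1
    field_simp

/-- **Formula (2.16)** of Chen–Diao: the evolution operator `e^{−iHt}` on the
invariant plane. -/
theorem exp_neg_I_t_searchHamiltonianMatrix (E t y : ℝ) (hy0 : 0 ≤ y) (hy1 : y ≤ 1) :
    NormedSpace.exp ((-(Complex.I * (t : ℂ))) • searchHamiltonianMatrix E y) =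
      Complex.exp (-(Complex.I * (E : ℂ) * (t : ℂ))) •
        !![(Real.cos (E * y * t) : ℂ) - Complex.I * (y : ℂ) * (Real.sin (E * y * t) : ℂ),
           -(Real.sqrt (1 - y ^ 2) : ℂ) * Complex.I * (Real.sin (E * y * t) : ℂ);
           -(Real.sqrt (1 - y ^ 2) : ℂ) * Complex.I * (Real.sin (E * y * t) : ℂ),
           (Real.cos (E * y * t) : ℂ) + Complex.I * (y : ℂ) * (Real.sin (E * y * t) : ℂ)] := by
  set s : ℝ := Real.sqrt (1 - y ^ 2) with hs_def
  have hy2 : (0 : ℝ) ≤ 1 - y ^ 2 := by nlinarith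
  have hs2 : (s : ℝ) ^ 2 = 1 - y ^ 2 := Real.sq_sqrt hy2
  have hs2c : (s : ℂ) ^ 2 = 1 - (y : ℂ) ^ 2 := by
    have := congrArg (Complex.ofReal) hs2
    push_cast at this ⊢
    linear_combination this
  set A : Matrix (Fin 2) (Fin 2) ℂ := !![(y : ℂ), (s : ℂ); (s : ℂ), -(y : ℂ)] with hA_def
  have hA : A * A = 1 := by
    rw [hA_def, Matrix.mul_fin_two]
    ext i j
    fin_cases i <;> fin_cases j <;>
      simp [Matrix.one_apply] <;>
      first
        | linear_combination hs2c
        | linear_combination (2 : ℂ) * hs2c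
        | linear_combination -hs2c
        | ring
  set c : ℂ := -(Complex.I * E * t) with hc_def
  set d : ℂ := -(Complex.I * E * y * t) with hd_def
  have hdecomp : (-(Complex.I * (t : ℂ))) • searchHamiltonianMatrix E y = c • 1 + d • A := by
    rw [searchHamiltonianMatrix, hA_def, hc_def, hd_def]
    ext i j
    fin_cases i <;> fin_cases j <;>
      · simp [Matrix.one_apply]
        push_cast
        ring
  rw [hdecomp,
    Matrix.exp_add_of_commute (c • (1 : Matrix (Fin 2) (Fin 2) ℂ)) (d • A)
      ((Commute.one_left (d • A)).smul_left c),
    Matrix.smul_one_eq_diagonal, Matrix.exp_diagonal, exp_smul_of_sq_eq_one d A hA]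
  have hdiag : NormedSpace.exp (fun _ : Fin 2 => c) = fun _ : Fin 2 => Complex.exp c := by
    rw [Pi.exp_def]
    funext i
    rw [Complex.exp_eq_exp_ℂ]
  rw [hdiag]
  have hcosh : Complex.cosh d = Complex.cos ((E * y * t : ℝ) : ℂ) := by
    rw [hd_def]
    have h1 : -(Complex.I * E * y * t) = -(((E * y * t : ℝ) : ℂ) * Complex.I) := by
      push_cast; ring
    rw [h1, Complex.cosh_neg, Complex.cosh_mul_I]
  have hsinh : Complex.sinh d = -(Complex.sin ((E * y * t : ℝ) : ℂ) * Complex.I) := by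
    rw [hd_def]
    have h1 : -(Complex.I * E * y * t) = -(((E * y * t : ℝ) : ℂ) * Complex.I) := by
      push_cast; ring
    rw [h1, Complex.sinh_neg, Complex.sinh_mul_I]
  rw [hcosh, hsinh]
  have hcexp : Complex.exp (-(Complex.I * (E : ℂ) * (t : ℂ))) = Complex.exp c := by rw [hc_def]
  rw [hcexp]
  ext i j
  fin_cases i <;> fin_cases j <;>
    · simp [Matrix.mul_apply, Fin.sum_univ_two, Matrix.one_apply, Matrix.diagonal,
        Complex.ofReal_cos, Complex.ofReal_sin, hA_def]
      push_cast [← Complex.ofReal_cos, ← Complex.ofReal_sin]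
      ring
end

section
/- Let E, t, y be real numbers with 0 ≤ y ≤ 1, let M(E,y) be the 2×2 complex matrix E·!![1+y², y·√(1−y²); y·√(1−y²), 1−y²], and let s(y) = (y, √(1−y²))ᵀ ∈ ℂ². Then exp(−i·t·M(E,y)) applied to s(y) equals e^{−iEt}·( y·cos(Eyt) − i·sin(Eyt), √(1−y²)·cos(Eyt) )ᵀ. -/
open Matrix
set_option maxHeartbeats 1000000

/-- **Formula (2.17)** of Chen–Diao: the solution `ψ(t) = e^{−iHt}|s⟩` of the
Schrödinger equation with initial state `s = (y, √(1−y²))ᵀ`. -/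
theorem exp_neg_I_t_searchHamiltonianMatrix_mulVec (E t y : ℝ) (hy0 : 0 ≤ y) (hy1 : y ≤ 1) :
    (NormedSpace.exp ((-(Complex.I * (t : ℂ))) • searchHamiltonianMatrix E y)).mulVec
        ![(y : ℂ), (Real.sqrt (1 - y ^ 2) : ℂ)] =
      Complex.exp (-(Complex.I * (E : ℂ) * (t : ℂ))) •
        ![(y : ℂ) * (Real.cos (E * y * t) : ℂ) - Complex.I * (Real.sin (E * y * t) : ℂ),
          (Real.sqrt (1 - y ^ 2) : ℂ) * (Real.cos (E * y * t) : ℂ)] := by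
  have h1 : (0:ℝ) ≤ 1 - y ^ 2 := by nlinarith
  set s : ℝ := Real.sqrt (1 - y ^ 2) with hsdef
  have hs2 : s ^ 2 = 1 - y ^ 2 := Real.sq_sqrt h1
  have hsC : (s:ℂ) ^ 2 = 1 - (y:ℂ) ^ 2 := by exact_mod_cast congrArg (Complex.ofReal) hs2
  have hs3 : (s:ℂ) ^ 3 = (1 - (y:ℂ) ^ 2) * s := by
    have : (s:ℂ) ^ 3 = (s:ℂ) ^ 2 * s := by ring
    rw [this, hsC]
  have h1y : ((1:ℂ) + y) ≠ 0 := by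
    intro h
    have := congrArg Complex.re h
    simp at this
    linarith
  set d0 : ℂ := -(Complex.I * t * E * (1 + y)) with hd0
  set d1 : ℂ := -(Complex.I * t * E * (1 - y)) with hd1
  set U : Matrix (Fin 2) (Fin 2) ℂ := !![(1 + y : ℂ), -(s:ℂ); (s:ℂ), (1 + y : ℂ)] with hU
  set V : Matrix (Fin 2) (Fin 2) ℂ :=
    (2 * (1 + (y:ℂ)))⁻¹ • !![(1 + y : ℂ), (s:ℂ); -(s:ℂ), (1 + y : ℂ)] with hV
  have hUV : U * V = 1 := by
    rw [hU, hV]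
    ext i j
    fin_cases i <;> fin_cases j <;>
      simp [Matrix.mul_apply, Fin.sum_univ_two, Matrix.one_apply] <;>
      field_simp <;> ring_nf <;> simp only [hsC] <;> ring
  have hVU : V * U = 1 := by
    rw [hU, hV]
    ext i j
    fin_cases i <;> fin_cases j <;>
      simp [Matrix.mul_apply, Fin.sum_univ_two, Matrix.one_apply] <;>
      field_simp <;> ring_nf <;> simp only [hsC] <;> ring
  have hDeq : Matrix.diagonal ![d0, d1] = !![d0, 0; 0, d1] := by
    ext i j; fin_cases i <;> fin_cases j <;> simp [Matrix.diagonal_apply]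
  have hA : (-(Complex.I * (t : ℂ))) • searchHamiltonianMatrix E y =
      U * Matrix.diagonal ![d0, d1] * V := by
    rw [hU, hV, hDeq, hd0, hd1]
    ext i j
    fin_cases i <;> fin_cases j <;>
      simp [searchHamiltonianMatrix, Matrix.mul_apply, Fin.sum_univ_two, ← hsdef] <;>
      field_simp <;> ring_nf <;> simp only [hsC] <;> ring
  have hexp : NormedSpace.exp ((-(Complex.I * (t : ℂ))) • searchHamiltonianMatrix E y)
      = U * !![Complex.exp d0, 0; 0, Complex.exp d1] * V := by
    rw [hA]
    have hexpD : NormedSpace.exp (Matrix.diagonal ![d0, d1]) =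
        !![Complex.exp d0, 0; 0, Complex.exp d1] := by
      rw [Matrix.exp_diagonal, Pi.exp_def]
      ext i j
      fin_cases i <;> fin_cases j <;> simp [Matrix.diagonal_apply, ← Complex.exp_eq_exp_ℂ]
    have hcal := Matrix.exp_units_conj
      (⟨U, V, hUV, hVU⟩ : (Matrix (Fin 2) (Fin 2) ℂ)ˣ) (Matrix.diagonal ![d0, d1])
    rw [hexpD] at hcal
    exact hcal
  rw [hexp]
  have he0 : Complex.exp d0 = Complex.exp (-(Complex.I * E * t)) *
      (Complex.cos (E*y*t) - Complex.sin (E*y*t) * Complex.I) := by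
    have h : d0 = -(Complex.I * E * t) + (-((E:ℂ)*y*t)) * Complex.I := by rw [hd0]; ring
    rw [h, Complex.exp_add, Complex.exp_mul_I, Complex.cos_neg, Complex.sin_neg]; ring
  have he1 : Complex.exp d1 = Complex.exp (-(Complex.I * E * t)) *
      (Complex.cos (E*y*t) + Complex.sin (E*y*t) * Complex.I) := by
    have h : d1 = -(Complex.I * E * t) + (((E:ℂ)*y*t)) * Complex.I := by rw [hd1]; ring
    rw [h, Complex.exp_add, Complex.exp_mul_I]
  rw [hU, hV]
  funext i
  fin_cases i <;>
    simp [Matrix.mulVec, Matrix.mul_apply, dotProduct, Fin.sum_univ_two, he0, he1,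
      ← Complex.ofReal_cos, ← Complex.ofReal_sin] <;>
    (try push_cast) <;> (try field_simp) <;> (try ring_nf) <;>
    (try simp only [hsC, hs3]) <;> ring
end

section
/- Let E > 0 and 0 < y ≤ 1 be real numbers, let M(E,y) be the 2×2 complex matrix E·!![1+y², y·√(1−y²); y·√(1−y²), 1−y²], let s(y) = (y, √(1−y²))ᵀ ∈ ℂ², and set T = π/(2Ey). Then exp(−i·T·M(E,y)) applied to s(y) equals −i·e^{−iET}·(1, 0)ᵀ; in particular, the second component of the evolved state vanishes and the first component has modulus 1. -/
open Matrix

set_option maxHeartbeats 1000000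

/-- **Corollary 2.2** of Chen–Diao: at time `T = π/(2Ey)` the evolved state
`e^{−iHT}|s⟩` equals `−i e^{−iET} (1,0)ᵀ`; in particular its second component
vanishes and its first component has modulus 1, so the state lies entirely in
the target subspace. -/
theorem measurement_time_state_in_target (E y : ℝ) (hE : 0 < E) (hy0 : 0 < y) (hy1 : y ≤ 1)
    (T : ℝ) (hT : T = Real.pi / (2 * E * y)) :
    (NormedSpace.exp ((-(Complex.I * (T : ℂ))) • searchHamiltonianMatrix E y)).mulVec
        ![(y : ℂ), (Real.sqrt (1 - y ^ 2) : ℂ)] =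
      (-Complex.I * Complex.exp (-(Complex.I * (E : ℂ) * (T : ℂ)))) • ![1, 0] ∧
    (NormedSpace.exp ((-(Complex.I * (T : ℂ))) • searchHamiltonianMatrix E y)).mulVec
        ![(y : ℂ), (Real.sqrt (1 - y ^ 2) : ℂ)] 1 = 0 ∧
    ‖(NormedSpace.exp ((-(Complex.I * (T : ℂ))) •
        searchHamiltonianMatrix E y)).mulVec
          ![(y : ℂ), (Real.sqrt (1 - y ^ 2) : ℂ)] 0‖ = 1 := by
  have hy2 : (0:ℝ) ≤ 1 - y ^ 2 := by nlinarith
  have hc2 : ((Real.sqrt (1 - y ^ 2) : ℝ) : ℂ) ^ 2 = 1 - (y:ℂ) ^ 2 := by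
    have h := Real.sq_sqrt hy2
    exact_mod_cast congrArg Complex.ofReal h
  have h1y : ((1:ℂ) + y) ≠ 0 := by
    have h : (0:ℝ) < 1 + y := by linarith
    intro hcon
    have : ((1:ℝ) + y : ℝ) = 0 := by exact_mod_cast hcon
    linarith
  have h2 : (2 : ℂ) * (1 + y) ≠ 0 := mul_ne_zero two_ne_zero h1y
  -- abbreviations (plain lets via generalize would complicate; just repeat literals)
  have hPQ : (!![1 + (y:ℂ), -((Real.sqrt (1 - y ^ 2) : ℝ) : ℂ);
        ((Real.sqrt (1 - y ^ 2) : ℝ) : ℂ), 1 + (y:ℂ)] : Matrix (Fin 2) (Fin 2) ℂ) *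
      (((2 * (1 + (y:ℂ)))⁻¹) • !![1 + (y:ℂ), ((Real.sqrt (1 - y ^ 2) : ℝ) : ℂ);
        -((Real.sqrt (1 - y ^ 2) : ℝ) : ℂ), 1 + (y:ℂ)]) = 1 := by
    ext i j
    fin_cases i <;> fin_cases j <;>
      simp [Matrix.mul_apply, Fin.sum_univ_two, Matrix.one_apply] <;>
      field_simp <;>
      first
        | ring1
        | linear_combination hc2
        | linear_combination -hc2
  have hQP : (((2 * (1 + (y:ℂ)))⁻¹) • !![1 + (y:ℂ), ((Real.sqrt (1 - y ^ 2) : ℝ) : ℂ);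
        -((Real.sqrt (1 - y ^ 2) : ℝ) : ℂ), 1 + (y:ℂ)]) *
      (!![1 + (y:ℂ), -((Real.sqrt (1 - y ^ 2) : ℝ) : ℂ);
        ((Real.sqrt (1 - y ^ 2) : ℝ) : ℂ), 1 + (y:ℂ)] : Matrix (Fin 2) (Fin 2) ℂ) = 1 := by
    ext i j
    fin_cases i <;> fin_cases j <;>
      simp [Matrix.mul_apply, Fin.sum_univ_two, Matrix.one_apply] <;>
      field_simp <;>
      first
        | ring1
        | linear_combination hc2
        | linear_combination -hc2
  have hUnit : IsUnit (!![1 + (y:ℂ), -((Real.sqrt (1 - y ^ 2) : ℝ) : ℂ);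
        ((Real.sqrt (1 - y ^ 2) : ℝ) : ℂ), 1 + (y:ℂ)] : Matrix (Fin 2) (Fin 2) ℂ) :=
    ⟨⟨_, _, hPQ, hQP⟩, rfl⟩
  have hPinv : (!![1 + (y:ℂ), -((Real.sqrt (1 - y ^ 2) : ℝ) : ℂ);
        ((Real.sqrt (1 - y ^ 2) : ℝ) : ℂ), 1 + (y:ℂ)] : Matrix (Fin 2) (Fin 2) ℂ)⁻¹ =
      ((2 * (1 + (y:ℂ)))⁻¹) • !![1 + (y:ℂ), ((Real.sqrt (1 - y ^ 2) : ℝ) : ℂ);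
        -((Real.sqrt (1 - y ^ 2) : ℝ) : ℂ), 1 + (y:ℂ)] := Matrix.inv_eq_right_inv hPQ
  have hB : (-(Complex.I * (T : ℂ))) • searchHamiltonianMatrix E y =
      (!![1 + (y:ℂ), -((Real.sqrt (1 - y ^ 2) : ℝ) : ℂ);
        ((Real.sqrt (1 - y ^ 2) : ℝ) : ℂ), 1 + (y:ℂ)] : Matrix (Fin 2) (Fin 2) ℂ) *
      Matrix.diagonal ![-(Complex.I * T * E * (1 + y)), -(Complex.I * T * E * (1 - y))] *
      (!![1 + (y:ℂ), -((Real.sqrt (1 - y ^ 2) : ℝ) : ℂ);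
        ((Real.sqrt (1 - y ^ 2) : ℝ) : ℂ), 1 + (y:ℂ)] : Matrix (Fin 2) (Fin 2) ℂ)⁻¹ := by
    rw [hPinv]
    ext i j
    fin_cases i <;> fin_cases j <;>
      simp [searchHamiltonianMatrix, Matrix.mul_apply, Fin.sum_univ_two,
        Matrix.diagonal_apply, Matrix.mul_diagonal, Matrix.diagonal_mul,
        Matrix.vecMul, dotProduct] <;>
      push_cast <;> field_simp <;>
      first
        | ring1
        | linear_combination (Complex.I * T * E * (2 - 2*(y:ℂ)^2)) * hc2
        | linear_combination (Complex.I * T * E * (2 + 4*(y:ℂ) + 2*(y:ℂ)^2)) * hc2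
        | (simp only [show ((Real.sqrt (1 - y ^ 2) : ℝ) : ℂ) ^ 4 = (((Real.sqrt (1 - y ^ 2) : ℝ) : ℂ) ^ 2) ^ 2 by ring,
            show ((Real.sqrt (1 - y ^ 2) : ℝ) : ℂ) ^ 3 = ((Real.sqrt (1 - y ^ 2) : ℝ) : ℂ) * ((Real.sqrt (1 - y ^ 2) : ℝ) : ℂ) ^ 2 by ring, hc2]; ring1)
  rw [hB, Matrix.exp_conj _ _ hUnit, Matrix.exp_diagonal, hPinv]
  have hTEy : (T:ℝ) * E * y = Real.pi / 2 := by
    rw [hT]; field_simp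
  have hTEyC : ((T:ℂ)) * E * y = (Real.pi : ℂ) / 2 := by
    exact_mod_cast congrArg Complex.ofReal hTEy
  have hcosC : Complex.cos ((Real.pi : ℂ) / 2) = 0 := by
    rw [show ((Real.pi : ℂ) / 2) = ((Real.pi / 2 : ℝ) : ℂ) by push_cast; ring,
      ← Complex.ofReal_cos, Real.cos_pi_div_two, Complex.ofReal_zero]
  have hsinC : Complex.sin ((Real.pi : ℂ) / 2) = 1 := by
    rw [show ((Real.pi : ℂ) / 2) = ((Real.pi / 2 : ℝ) : ℂ) by push_cast; ring,
      ← Complex.ofReal_sin, Real.sin_pi_div_two, Complex.ofReal_one]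
  have hlp' : Complex.exp (-(Complex.I * T * E * (1 + y))) =
      -Complex.I * Complex.exp (-(Complex.I * E * T)) := by
    have h : -(Complex.I * T * E * (1 + (y:ℂ))) =
        -(Complex.I * E * T) + (-((Real.pi : ℂ) / 2)) * Complex.I := by
      linear_combination (-Complex.I) * hTEyC
    rw [h, Complex.exp_add, Complex.exp_mul_I, Complex.cos_neg, Complex.sin_neg, hcosC, hsinC]
    ring
  have hlm' : Complex.exp (-(Complex.I * T * E * (1 - y))) =
      Complex.I * Complex.exp (-(Complex.I * E * T)) := by
    have h : -(Complex.I * T * E * (1 - (y:ℂ))) =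
        -(Complex.I * E * T) + ((Real.pi : ℂ) / 2) * Complex.I := by
      linear_combination Complex.I * hTEyC
    rw [h, Complex.exp_add, Complex.exp_mul_I, hcosC, hsinC]
    ring
  have hexp : (NormedSpace.exp (![-(Complex.I * T * E * (1 + (y:ℂ))),
        -(Complex.I * T * E * (1 - (y:ℂ)))] : Fin 2 → ℂ)) =
      ![-Complex.I * Complex.exp (-(Complex.I * E * T)),
        Complex.I * Complex.exp (-(Complex.I * E * T))] := by
    rw [Pi.exp_def]
    funext j
    fin_cases j <;> simp [← Complex.exp_eq_exp_ℂ, hlp', hlm']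
  rw [hexp]
  have key : ((!![1 + (y:ℂ), -((Real.sqrt (1 - y ^ 2) : ℝ) : ℂ);
        ((Real.sqrt (1 - y ^ 2) : ℝ) : ℂ), 1 + (y:ℂ)] : Matrix (Fin 2) (Fin 2) ℂ) *
      Matrix.diagonal ![-Complex.I * Complex.exp (-(Complex.I * E * T)),
        Complex.I * Complex.exp (-(Complex.I * E * T))] *
      (((2 * (1 + (y:ℂ)))⁻¹) • !![1 + (y:ℂ), ((Real.sqrt (1 - y ^ 2) : ℝ) : ℂ);
        -((Real.sqrt (1 - y ^ 2) : ℝ) : ℂ), 1 + (y:ℂ)])).mulVec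
        ![(y : ℂ), ((Real.sqrt (1 - y ^ 2) : ℝ) : ℂ)] =
      (-Complex.I * Complex.exp (-(Complex.I * (E : ℂ) * (T : ℂ)))) • ![1, 0] := by
    funext i
    fin_cases i <;>
      simp [Matrix.mulVec, Matrix.mul_apply, dotProduct, Fin.sum_univ_two,
        Matrix.diagonal_apply, Matrix.mul_diagonal, Matrix.diagonal_mul,
        Matrix.vecMul] <;>
      field_simp <;>
      first
        | linear_combination (-(Complex.I * Complex.exp (-(Complex.I * E * T)) *
            (4 + 6*(y:ℂ) + 2*(y:ℂ)^2))) * hc2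
        | linear_combination (-(2 * Complex.I * Complex.exp (-(Complex.I * E * T)) *
            ((Real.sqrt (1 - y ^ 2) : ℝ) : ℂ) * (1 + (y:ℂ)))) * hc2
        | (simp only [show ((Real.sqrt (1 - y ^ 2) : ℝ) : ℂ) ^ 4 = (((Real.sqrt (1 - y ^ 2) : ℝ) : ℂ) ^ 2) ^ 2 by ring,
            show ((Real.sqrt (1 - y ^ 2) : ℝ) : ℂ) ^ 3 = ((Real.sqrt (1 - y ^ 2) : ℝ) : ℂ) * ((Real.sqrt (1 - y ^ 2) : ℝ) : ℂ) ^ 2 by ring, hc2]; ring1)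
  refine ⟨key, ?_, ?_⟩
  · rw [key]; simp
  · rw [key]; simp [Complex.norm_exp]
end

section
/- Let E, t, y be real numbers with 0 ≤ y ≤ 1, let M(E,y) be the 2×2 complex matrix E·!![1+y², y·√(1−y²); y·√(1−y²), 1−y²], and define X₁ = (1/√2)·(√(1+y), √(1−y))ᵀ and X₂ = (1/√2)·(−√(1−y), √(1+y))ᵀ in ℂ². Then exp(−i·t·M(E,y))·X₁ = e^{−iE(1+y)t}·X₁ and exp(−i·t·M(E,y))·X₂ = e^{−iE(1−y)t}·X₂. -/
open Matrix

attribute [local instance] Matrix.linftyOpNormedRing Matrix.linftyOpNormedAlgebra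

lemma exp_mulVec_eigen (A : Matrix (Fin 2) (Fin 2) ℂ) (v : Fin 2 → ℂ) (c : ℂ)
    (h : A.mulVec v = c • v) :
    (NormedSpace.exp A).mulVec v = Complex.exp c • v := by
  have hpow : ∀ k : ℕ, (A ^ k).mulVec v = c ^ k • v := by
    intro k
    induction k with
    | zero => simp
    | succ k ih =>
      rw [pow_succ, ← Matrix.mulVec_mulVec, h, Matrix.mulVec_smul, ih, smul_smul, pow_succ,
        mul_comm]
  let L : Matrix (Fin 2) (Fin 2) ℂ →ₗ[ℂ] (Fin 2 → ℂ) :=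
    { toFun := fun B => B.mulVec v
      map_add' := fun B C => Matrix.add_mulVec B C v
      map_smul' := fun r B => Matrix.smul_mulVec r B v }
  have hs : Summable (fun k : ℕ => ((k.factorial : ℂ))⁻¹ • A ^ k) :=
    NormedSpace.expSeries_summable' (𝕂 := ℂ) A
  have hL : Continuous L := L.continuous_of_finiteDimensional
  have key : (NormedSpace.exp A).mulVec v
      = ∑' k : ℕ, ((k.factorial : ℂ))⁻¹ • (A ^ k).mulVec v := by
    rw [NormedSpace.exp_eq_tsum (𝕂 := ℂ)]
    have h2 := (hs.hasSum.map L hL).tsum_eq.symm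
    show L (∑' k : ℕ, ((k.factorial : ℂ))⁻¹ • A ^ k) = _
    rw [h2]
    simp only [L, Function.comp, LinearMap.coe_mk, AddHom.coe_mk, Matrix.smul_mulVec]
  rw [key]
  have hsc : Summable (fun k : ℕ => ((k.factorial : ℂ))⁻¹ * c ^ k) :=
    NormedSpace.expSeries_summable' (𝕂 := ℂ) c
  calc ∑' k : ℕ, ((k.factorial : ℂ))⁻¹ • (A ^ k).mulVec v
      = ∑' k : ℕ, (((k.factorial : ℂ))⁻¹ * c ^ k) • v := by
        simp only [hpow, smul_smul]
    _ = (∑' k : ℕ, ((k.factorial : ℂ))⁻¹ * c ^ k) • v := by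
        rw [hsc.tsum_smul_const]
    _ = Complex.exp c • v := by
        rw [Complex.exp_eq_exp_ℂ, NormedSpace.exp_eq_tsum (𝕂 := ℂ)]
        simp [smul_eq_mul]

/-- **Theorem 2.3(ii)** of Chen–Diao: the evolution operator `e^{−iHt}`
acts on the eigenvectors `X₁`, `X₂` by the phases `e^{−iE(1+y)t}`, `e^{−iE(1−y)t}`. -/
theorem exp_searchHamiltonianMatrix_eigenvectors (E t y : ℝ) (hy0 : 0 ≤ y) (hy1 : y ≤ 1)
    (X₁ X₂ : Fin 2 → ℂ)
    (hX₁ : X₁ = (1 / (Real.sqrt 2 : ℂ)) •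
        ![(Real.sqrt (1 + y) : ℂ), (Real.sqrt (1 - y) : ℂ)])
    (hX₂ : X₂ = (1 / (Real.sqrt 2 : ℂ)) •
        ![-(Real.sqrt (1 - y) : ℂ), (Real.sqrt (1 + y) : ℂ)]) :
    (NormedSpace.exp ((-(Complex.I * (t : ℂ))) • searchHamiltonianMatrix E y)).mulVec X₁ =
        Complex.exp (-(Complex.I * ((E * (1 + y) * t : ℝ) : ℂ))) • X₁ ∧
    (NormedSpace.exp ((-(Complex.I * (t : ℂ))) • searchHamiltonianMatrix E y)).mulVec X₂ =
        Complex.exp (-(Complex.I * ((E * (1 - y) * t : ℝ) : ℂ))) • X₂ := by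
  set a := Real.sqrt (1 + y) with ha_def
  set b := Real.sqrt (1 - y) with hb_def
  have ha : (a : ℝ) ^ 2 = 1 + y := Real.sq_sqrt (by linarith)
  have hb : (b : ℝ) ^ 2 = 1 - y := Real.sq_sqrt (by linarith)
  have hs : Real.sqrt (1 - y ^ 2) = a * b := by
    rw [ha_def, hb_def, ← Real.sqrt_mul (by linarith)]
    ring_nf
  have haC : ((a : ℂ)) ^ 2 = 1 + (y : ℂ) := by exact_mod_cast congrArg (Complex.ofReal) ha
  have hbC : ((b : ℂ)) ^ 2 = 1 - (y : ℂ) := by exact_mod_cast congrArg (Complex.ofReal) hb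
  -- eigenvector equations for M
  have hv1 : (searchHamiltonianMatrix E y).mulVec ![(a : ℂ), (b : ℂ)]
      = ((E * (1 + y) : ℝ) : ℂ) • ![(a : ℂ), (b : ℂ)] := by
    funext i
    fin_cases i <;>
      · simp [searchHamiltonianMatrix, Matrix.mulVec, dotProduct, Fin.sum_univ_two, hs]
        push_cast
        first
        | linear_combination (E : ℂ) * (y : ℂ) * (a : ℂ) * hbC
        | linear_combination (E : ℂ) * (y : ℂ) * (b : ℂ) * haC
  have hv2 : (searchHamiltonianMatrix E y).mulVec ![-(b : ℂ), (a : ℂ)]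
      = ((E * (1 - y) : ℝ) : ℂ) • ![-(b : ℂ), (a : ℂ)] := by
    funext i
    fin_cases i <;>
      · simp [searchHamiltonianMatrix, Matrix.mulVec, dotProduct, Fin.sum_univ_two, hs]
        push_cast
        first
        | linear_combination (E : ℂ) * (y : ℂ) * (b : ℂ) * haC
        | linear_combination (-((E : ℂ) * (y : ℂ) * (a : ℂ))) * hbC
  have hc1 : (-(Complex.I * (t : ℂ))) * ((E * (1 + y) : ℝ) : ℂ)
      = -(Complex.I * ((E * (1 + y) * t : ℝ) : ℂ)) := by push_cast; ring
  have hc2 : (-(Complex.I * (t : ℂ))) * ((E * (1 - y) : ℝ) : ℂ)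
      = -(Complex.I * ((E * (1 - y) * t : ℝ) : ℂ)) := by push_cast; ring
  have hA1 : ((-(Complex.I * (t : ℂ))) • searchHamiltonianMatrix E y).mulVec ![(a : ℂ), (b : ℂ)]
      = (-(Complex.I * ((E * (1 + y) * t : ℝ) : ℂ))) • ![(a : ℂ), (b : ℂ)] := by
    rw [Matrix.smul_mulVec, hv1, smul_smul, hc1]
  have hA2 : ((-(Complex.I * (t : ℂ))) • searchHamiltonianMatrix E y).mulVec ![-(b : ℂ), (a : ℂ)]
      = (-(Complex.I * ((E * (1 - y) * t : ℝ) : ℂ))) • ![-(b : ℂ), (a : ℂ)] := by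
    rw [Matrix.smul_mulVec, hv2, smul_smul, hc2]
  constructor
  · rw [hX₁, Matrix.mulVec_smul, exp_mulVec_eigen _ _ _ hA1, smul_comm]
  · rw [hX₂, Matrix.mulVec_smul, exp_mulVec_eigen _ _ _ hA2, smul_comm]
end

section
/- Let M be a positive integer and let Δ be a real number with 0 < Δ < 1/M. Then sin²(MΔπ)/(M²·sin²(Δπ)) + sin²(M(1/M − Δ)π)/(M²·sin²((1/M − Δ)π)) ≥ 8/π². -/
open Real

lemma concave_sin_bound {u : ℝ} (h0 : 0 ≤ u) (h1 : u ≤ 1/4) :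
    2 * Real.sqrt 2 * u ≤ Real.sin (u * π) := by
  have h := strictConcaveOn_sin_Icc.concaveOn.2
    (show (0:ℝ) ∈ Set.Icc 0 π from ⟨le_rfl, pi_pos.le⟩)
    (show π/4 ∈ Set.Icc 0 π from ⟨by positivity, by linarith [pi_pos]⟩)
    (show (0:ℝ) ≤ 1 - 4*u by linarith)
    (show (0:ℝ) ≤ 4*u by linarith)
    (show (1 - 4*u) + 4*u = 1 by ring)
  simp only [smul_eq_mul, Real.sin_zero, mul_zero, zero_add, Real.sin_pi_div_four] at h
  have he : 4*u*(π/4) = u * π := by ring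
  rw [he] at h
  calc 2 * Real.sqrt 2 * u = 4*u * (Real.sqrt 2 / 2) := by ring
    _ ≤ Real.sin (u * π) := h

lemma middle_poly {t : ℝ} (h0 : 0 ≤ t) (h1 : t ≤ 1/4) :
    8 * ((1/2-t)*(1/2+t))^2 ≤ (1 - π^2*t^2/2)^2 * ((1/2-t)^2 + (1/2+t)^2) := by
  have hp1 : π < 3.15 := by linarith [pi_lt_d2]
  have hp0 : 3.14 < π := by linarith [pi_gt_d6]
  have hq1 : π^2 < 9.9225 := by nlinarith
  have hq0 : (9:ℝ) < π^2 := by nlinarith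
  have hs : t^2 ≤ 1/16 := by nlinarith
  have hs0 : 0 ≤ t^2 := sq_nonneg t
  have hb : π^2*π^2/8 - 2*π^2 - 8 < 0 := by nlinarith
  have h2 : 0 ≤ 6 - π^2/2 + t^2*(π^2*π^2/8 - 2*π^2 - 8) := by nlinarith
  have key : 0 ≤ t^2*(6 - π^2/2 + t^2*(π^2*π^2/8 - 2*π^2 - 8)) + (t^2)^3*(π^2*π^2/2) := by
    have := mul_nonneg hs0 h2
    nlinarith [pow_nonneg hs0 3, sq_nonneg π]
  nlinarith [key]

lemma key_half {u : ℝ} (h0 : 0 < u) (hu : u ≤ 1/2) :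
    8 ≤ Real.sin (u * π) ^ 2 / u ^ 2 + Real.sin (u * π) ^ 2 / (1 - u) ^ 2 := by
  rcases le_or_gt u (1/4) with hq | hq
  · -- first term alone is ≥ 8
    have hb := concave_sin_bound h0.le hq
    have hb0 : 0 ≤ 2 * Real.sqrt 2 * u := by positivity
    have h2 : 8 * u^2 ≤ Real.sin (u*π) ^ 2 := by
      have := pow_le_pow_left₀ hb0 hb 2
      nlinarith [Real.sq_sqrt (by norm_num : (2:ℝ) ≥ 0).le]
    have hfirst : 8 ≤ Real.sin (u*π)^2 / u^2 := by
      rw [le_div_iff₀ (by positivity)]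
      linarith
    have hsec : 0 ≤ Real.sin (u*π)^2 / (1-u)^2 := by positivity
    linarith
  · -- middle range
    set t := 1/2 - u with ht
    have ht0 : 0 ≤ t := by simp [ht]; linarith
    have ht1 : t < 1/4 := by simp [ht]; linarith
    have hsin : Real.sin (u * π) = Real.cos (π * t) := by
      rw [show u * π = π/2 - π * t by rw [ht]; ring, Real.sin_pi_div_two_sub]
    have hc : 1 - π^2*t^2/2 ≤ Real.cos (π*t) := by
      have := Real.one_sub_sq_div_two_le_cos (x := π*t)
      calc 1 - π^2*t^2/2 = 1 - (π*t)^2/2 := by ring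
        _ ≤ _ := this
    have hts : t^2 ≤ 1/16 := by nlinarith
    have hc0 : (0:ℝ) ≤ 1 - π^2*t^2/2 := by
      have hq1 : π^2 < 9.9225 := by nlinarith [pi_lt_d2, pi_gt_d6]
      nlinarith [sq_nonneg t]
    have hcsq : (1 - π^2*t^2/2)^2 ≤ Real.cos (π*t)^2 := pow_le_pow_left₀ hc0 hc 2
    have hmp := middle_poly ht0 ht1.le
    have hx : (0:ℝ) < 1/2 - t := by linarith
    have hy : (0:ℝ) < 1/2 + t := by linarith
    have hu' : u = 1/2 - t := by rw [ht]; ring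
    have h1u : 1 - u = 1/2 + t := by rw [ht]; ring
    rw [hsin, h1u, hu']
    rw [div_add_div _ _ (by positivity : ((1/2-t)^2:ℝ) ≠ 0) (by positivity : ((1/2+t)^2:ℝ) ≠ 0),
      le_div_iff₀ (by positivity)]
    nlinarith [mul_le_mul_of_nonneg_right hcsq (by positivity : (0:ℝ) ≤ (1/2-t)^2 + (1/2+t)^2)]

lemma key_ineq {u : ℝ} (h0 : 0 < u) (h1 : u < 1) :
    8 ≤ Real.sin (u * π) ^ 2 / u ^ 2 + Real.sin (u * π) ^ 2 / (1 - u) ^ 2 := by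
  rcases le_or_gt u (1/2) with hu | hu
  · exact key_half h0 hu
  · have h := key_half (u := 1 - u) (by linarith) (by linarith)
    have hs : Real.sin ((1 - u) * π) = Real.sin (u * π) := by
      rw [show (1 - u) * π = π - u * π by ring, Real.sin_pi_sub]
    rw [hs, show (1 - (1 - u)) = u by ring] at h
    linarith

/-- The key inequality in **Theorem 2.4** of Chen–Diao: the total probability
of the two integers nearest to `My` in the phase-estimation measurement is at
least `8/π²`. -/
theorem phase_estimation_success_probability (M : ℕ) (hM : 0 < M)
    (Δ : ℝ) (h0 : 0 < Δ) (h1 : Δ < 1 / (M : ℝ)) :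
    8 / Real.pi ^ 2 ≤
      Real.sin ((M : ℝ) * Δ * Real.pi) ^ 2 / ((M : ℝ) ^ 2 * Real.sin (Δ * Real.pi) ^ 2) +
      Real.sin ((M : ℝ) * (1 / (M : ℝ) - Δ) * Real.pi) ^ 2 /
        ((M : ℝ) ^ 2 * Real.sin ((1 / (M : ℝ) - Δ) * Real.pi) ^ 2) := by
  have hM0 : (0:ℝ) < (M:ℝ) := by exact_mod_cast hM
  set u : ℝ := (M:ℝ) * Δ with hu
  have hu0 : 0 < u := by positivity
  have hu1 : u < 1 := by
    have := (mul_lt_mul_iff_right₀ hM0).2 h1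
    rwa [mul_one_div, div_self hM0.ne'] at this
  -- the second phase
  have hMe : (M:ℝ) * (1 / (M:ℝ) - Δ) = 1 - u := by
    field_simp
    rw [hu]
  have hδ : 1 / (M:ℝ) - Δ > 0 := by linarith
  have hδ1 : 1 / (M:ℝ) - Δ ≤ 1 := by
    have : (1:ℝ) ≤ (M:ℝ) := by exact_mod_cast hM
    have h2 : 1 / (M:ℝ) ≤ 1 := by
      rw [div_le_one hM0]; exact this
    linarith
  have hΔ1 : Δ < 1 := by
    have : (1:ℝ) ≤ (M:ℝ) := by exact_mod_cast hM
    have h2 : 1 / (M:ℝ) ≤ 1 := by rw [div_le_one hM0]; exact this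
    linarith
  rw [hMe, show (1 - u) * π = π - u * π by ring, Real.sin_pi_sub]
  -- bound denominators
  have hsin1 : 0 < Real.sin (Δ * π) := by
    apply Real.sin_pos_of_pos_of_lt_pi (by positivity)
    calc Δ * π < 1 * π := by
          exact (mul_lt_mul_iff_left₀ pi_pos).2 hΔ1
      _ = π := one_mul π
  have hsin2 : 0 < Real.sin ((1 / (M:ℝ) - Δ) * π) := by
    apply Real.sin_pos_of_pos_of_lt_pi (by positivity)
    rcases lt_or_eq_of_le hδ1 with h | h
    · calc (1 / (M:ℝ) - Δ) * π < 1 * π := (mul_lt_mul_iff_left₀ pi_pos).2 h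
        _ = π := one_mul π
    · exfalso
      -- if 1/M - Δ = 1 then 1/M ≤ 1 forces Δ ≤ 0
      have h2 : 1 / (M:ℝ) ≤ 1 := by
        rw [div_le_one hM0]; exact_mod_cast hM
      linarith
  have hd1 : (M:ℝ)^2 * Real.sin (Δ * π)^2 ≤ u^2 * π^2 := by
    have hle : Real.sin (Δ * π) ≤ Δ * π := Real.sin_le (by positivity)
    have := pow_le_pow_left₀ hsin1.le hle 2
    calc (M:ℝ)^2 * Real.sin (Δ*π)^2 ≤ (M:ℝ)^2 * (Δ*π)^2 := by nlinarith [sq_nonneg (M:ℝ)]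
      _ = u^2 * π^2 := by rw [hu]; ring
  have hd2 : (M:ℝ)^2 * Real.sin ((1/(M:ℝ) - Δ) * π)^2 ≤ (1-u)^2 * π^2 := by
    have hle : Real.sin ((1/(M:ℝ) - Δ) * π) ≤ (1/(M:ℝ) - Δ) * π := Real.sin_le (by positivity)
    have := pow_le_pow_left₀ hsin2.le hle 2
    calc (M:ℝ)^2 * Real.sin ((1/(M:ℝ) - Δ)*π)^2 ≤ (M:ℝ)^2 * ((1/(M:ℝ) - Δ)*π)^2 := by
          nlinarith [sq_nonneg (M:ℝ)]
      _ = ((M:ℝ) * (1/(M:ℝ) - Δ))^2 * π^2 := by ring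
      _ = (1-u)^2 * π^2 := by rw [hMe]
  have hnum : 0 ≤ Real.sin (u * π) ^ 2 := sq_nonneg _
  have hden1 : 0 < (M:ℝ)^2 * Real.sin (Δ * π)^2 := by positivity
  have hden2 : 0 < (M:ℝ)^2 * Real.sin ((1/(M:ℝ) - Δ) * π)^2 := by positivity
  have hstep1 : Real.sin (u*π)^2 / (u^2 * π^2) ≤
      Real.sin (u*π)^2 / ((M:ℝ)^2 * Real.sin (Δ * π)^2) :=
    div_le_div_of_nonneg_left hnum hden1 hd1
  have hstep2 : Real.sin (u*π)^2 / ((1-u)^2 * π^2) ≤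
      Real.sin (u*π)^2 / ((M:ℝ)^2 * Real.sin ((1/(M:ℝ) - Δ) * π)^2) :=
    div_le_div_of_nonneg_left hnum hden2 hd2
  have hkey := key_ineq hu0 hu1
  have hfinal : 8 / π^2 ≤ Real.sin (u*π)^2 / (u^2 * π^2) + Real.sin (u*π)^2 / ((1-u)^2 * π^2) := by
    simp only [← div_div, ← add_div]
    gcongr
  calc 8 / π^2 ≤ _ := hfinal
    _ ≤ _ := by
      have harg : (M:ℝ) * Δ * π = u * π := by rw [hu]
      rw [harg]
      exact add_le_add hstep1 hstep2
end

section
/- Let M be a positive integer, let y be a real number, and for each integer k with 0 ≤ k ≤ M−1 define α_k(y) = (1/M)·∑_{j=0}^{M−1} exp(2πi·j·(y − k/M)). Let m be an integer with m > 1. Then the sum of |α_k(y)|² over all k ∈ {0, 1, …, M−1} with d(y, k/M) > m/M is at most 1/(2(m−1)), where d(y₁, y₂) = min_{j ∈ ℤ} |y₁ − y₂ + j|. -/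
open scoped Classical

lemma iInf_abs_add_int (x : ℝ) : (⨅ j : ℤ, |x + (j : ℝ)|) = |x - round x| := by
  apply le_antisymm
  · have hb : BddBelow (Set.range fun j : ℤ => |x + (j : ℝ)|) := by
      refine ⟨0, ?_⟩; rintro r ⟨j, rfl⟩; positivity
    have := ciInf_le hb (-round x)
    simpa [sub_eq_add_neg] using this
  · refine le_ciInf fun j => ?_
    simpa [sub_neg_eq_add] using round_le x (-j)

lemma abs_exp_two_pi_sub_one (t : ℝ) :
    ‖Complex.exp ((2 * Real.pi * t : ℝ) * Complex.I) - 1‖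
      = 2 * |Real.sin (Real.pi * t)| := by
  have h : Complex.exp ((2 * Real.pi * t : ℝ) * Complex.I) - 1
      = ((Real.cos (2 * Real.pi * t) - 1 : ℝ) : ℂ) + ((Real.sin (2 * Real.pi * t) : ℝ) : ℂ) * Complex.I := by
    rw [Complex.exp_mul_I, ← Complex.ofReal_cos, ← Complex.ofReal_sin]
    push_cast; ring
  rw [h, Complex.norm_add_mul_I]
  have hs : Real.sin (Real.pi * t) ^ 2 = 1 / 2 - Real.cos (2 * (Real.pi * t)) / 2 :=
    Real.sin_sq_eq_half_sub _
  have h2 : (Real.cos (2 * Real.pi * t) - 1) ^ 2 + Real.sin (2 * Real.pi * t) ^ 2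
      = (2 * |Real.sin (Real.pi * t)|) ^ 2 := by
    have hpy := Real.sin_sq_add_cos_sq (2 * Real.pi * t)
    have habs : |Real.sin (Real.pi * t)| ^ 2 = Real.sin (Real.pi * t) ^ 2 := sq_abs _
    rw [mul_pow, habs]
    rw [show 2 * (Real.pi * t) = 2 * Real.pi * t by ring] at hs
    nlinarith [hs, hpy]
  rw [h2, Real.sqrt_sq (by positivity)]

lemma two_mul_le_abs_sin (x : ℝ) : 2 * |x - round x| ≤ |Real.sin (Real.pi * x)| := by
  have hr : |x - round x| ≤ 1 / 2 := abs_sub_round x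
  set t := x - round x with ht
  have hx : Real.sin (Real.pi * x) = (-1) ^ (round x) * Real.sin (Real.pi * t) := by
    have : Real.pi * x = Real.pi * t + (round x : ℤ) * Real.pi := by rw [ht]; ring
    rw [this, Real.sin_add_int_mul_pi]
  have habs : |Real.sin (Real.pi * x)| = |Real.sin (Real.pi * t)| := by
    rw [hx, abs_mul]
    rcases Int.even_or_odd (round x) with hp | hp
    · rw [hp.neg_one_zpow]; simp
    · rw [Odd.neg_one_zpow hp]; simp
  have hsin : |Real.sin (Real.pi * t)| = Real.sin (Real.pi * |t|) := by
    rcases le_or_gt 0 t with h | h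
    · rw [abs_of_nonneg h, abs_of_nonneg]
      exact Real.sin_nonneg_of_nonneg_of_le_pi (by positivity)
        (by nlinarith [Real.pi_pos, abs_of_nonneg h ▸ hr])
    · rw [abs_of_neg h]
      rw [show Real.pi * t = -(Real.pi * -t) by ring, Real.sin_neg, abs_neg, abs_of_nonneg]
      exact Real.sin_nonneg_of_nonneg_of_le_pi
        (mul_nonneg Real.pi_pos.le (by linarith))
        (by nlinarith [Real.pi_pos, abs_of_neg h ▸ hr])
  have hj : 2 / Real.pi * (Real.pi * |t|) ≤ Real.sin (Real.pi * |t|) :=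
    Real.mul_le_sin (by positivity) (by nlinarith [Real.pi_pos])
  have hpi := Real.pi_pos
  rw [habs, hsin]
  calc 2 * |t| = 2 / Real.pi * (Real.pi * |t|) := by field_simp
    _ ≤ _ := hj



lemma amp_bound (M : ℕ) (hM : 0 < M) (x : ℝ) (hD : 0 < |x - round x|) :
    (‖(1 / (M : ℂ)) * ∑ j ∈ Finset.range M,
        Complex.exp (2 * (Real.pi : ℂ) * Complex.I * (j : ℂ) * (x : ℂ))‖) ^ 2 ≤
      1 / (4 * ((M : ℝ) * |x - round x|) ^ 2) := by
  set D := |x - round x| with hDdef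
  set z : ℂ := Complex.exp ((2 * Real.pi * x : ℝ) * Complex.I) with hz
  have hterm : ∀ j : ℕ, Complex.exp (2 * (Real.pi : ℂ) * Complex.I * (j : ℂ) * (x : ℂ)) = z ^ j := by
    intro j
    rw [hz, ← Complex.exp_nat_mul]
    congr 1
    push_cast; ring
  have hz1 : z ≠ 1 := by
    intro h
    rw [hz, Complex.exp_eq_one_iff] at h
    obtain ⟨n, hn⟩ := h
    have hx : x = (n : ℝ) := by
      have h2 : ((2 * Real.pi * x : ℝ) : ℂ) = ((2 * Real.pi * n : ℝ) : ℂ) := by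
        apply mul_right_cancel₀ Complex.I_ne_zero
        rw [hn]; push_cast; ring
      have h3 : 2 * Real.pi * x = 2 * Real.pi * n := by exact_mod_cast h2
      have hpi := Real.pi_ne_zero
      field_simp at h3
      exact h3
    have hzero : D = 0 := by rw [hDdef, hx]; simp
    rw [hzero] at hD; exact lt_irrefl _ hD
  have hgeom : ∑ j ∈ Finset.range M, z ^ j = (z ^ M - 1) / (z - 1) := geom_sum_eq hz1 M
  have habsz : ‖z‖ = 1 := Complex.norm_exp_ofReal_mul_I _
  have hnum : ‖z ^ M - 1‖ ≤ 2 := by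
    calc ‖z ^ M - 1‖ ≤ ‖z ^ M‖ + ‖(1:ℂ)‖ :=
          norm_sub_le _ _
      _ ≤ 2 := by rw [norm_pow, habsz, one_pow]; norm_num
  have hden : ‖z - 1‖ = 2 * |Real.sin (Real.pi * x)| := abs_exp_two_pi_sub_one x
  have hsin : 2 * D ≤ |Real.sin (Real.pi * x)| := two_mul_le_abs_sin x
  have hMR : (0 : ℝ) < M := by exact_mod_cast hM
  have hden4 : 4 * D ≤ ‖z - 1‖ := by rw [hden]; linarith
  have hdenpos : 0 < ‖z - 1‖ := lt_of_lt_of_le (by linarith) hden4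
  have habs : ‖(1 / (M : ℂ)) * ∑ j ∈ Finset.range M,
      Complex.exp (2 * (Real.pi : ℂ) * Complex.I * (j : ℂ) * (x : ℂ))‖ ≤ 1 / (2 * ((M : ℝ) * D)) := by
    have hsum : (∑ j ∈ Finset.range M,
        Complex.exp (2 * (Real.pi : ℂ) * Complex.I * (j : ℂ) * (x : ℂ))) = (z ^ M - 1) / (z - 1) := by
      rw [← hgeom]; exact Finset.sum_congr rfl fun j _ => hterm j
    rw [hsum, norm_mul, norm_div, norm_div, norm_one, Complex.norm_natCast]
    have hq : ‖z ^ M - 1‖ / ‖z - 1‖ ≤ 2 / (4 * D) :=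
      div_le_div₀ (by norm_num) hnum (by positivity) hden4
    calc 1 / (M : ℝ) * (‖z ^ M - 1‖ / ‖z - 1‖)
        ≤ 1 / (M : ℝ) * (2 / (4 * D)) := by
          exact mul_le_mul_of_nonneg_left hq (by positivity)
      _ = 1 / (2 * ((M : ℝ) * D)) := by field_simp; ring
  calc _ ≤ (1 / (2 * ((M : ℝ) * D))) ^ 2 := by
        apply pow_le_pow_left₀ (norm_nonneg _) habs 2
    _ = 1 / (4 * ((M : ℝ) * D) ^ 2) := by ring



lemma telescope_sum (m : ℤ) (hm : 1 < m) (T : Finset ℤ) (hT : ∀ n ∈ T, m ≤ n) :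
    ∑ n ∈ T, 1 / (2 * (n : ℝ) ^ 2) ≤ 1 / (2 * ((m : ℝ) - 1)) := by
  have hm1 : (1 : ℝ) < (m : ℝ) := by exact_mod_cast hm
  have hm2 : (2 : ℝ) ≤ (m : ℝ) := by exact_mod_cast (by omega : (2:ℤ) ≤ m)
  -- termwise: 1/(2n²) ≤ 1/2 * (1/(n-1) - 1/n)
  have hterm : ∀ n ∈ T, 1 / (2 * (n : ℝ) ^ 2) ≤
      1 / (2 * ((n : ℝ) - 1)) - 1 / (2 * (n : ℝ)) := by
    intro n hn
    have h2 : (2 : ℝ) ≤ (n : ℝ) := by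
      have h := hT n hn; have h' : (m : ℝ) ≤ (n : ℝ) := by exact_mod_cast h
      linarith
    rw [div_sub_div _ _ (by nlinarith) (by nlinarith),
      div_le_div_iff₀ (by nlinarith) (by nlinarith)]
    nlinarith
  calc ∑ n ∈ T, 1 / (2 * (n : ℝ) ^ 2)
      ≤ ∑ n ∈ T, (1 / (2 * ((n : ℝ) - 1)) - 1 / (2 * (n : ℝ))) :=
        Finset.sum_le_sum hterm
    _ ≤ 1 / (2 * ((m : ℝ) - 1)) := ?_
  -- reindex into ℕ
  set e : ℤ → ℕ := fun n => (n - m).toNat with he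
  have hme : ∀ n ∈ T, (m : ℤ) + e n = n := by
    intro n hn
    have h := hT n hn
    simp only [he]
    omega
  have hinj : ∀ a ∈ T, ∀ b ∈ T, e a = e b → a = b := by
    intro a ha b hb hab
    have h1 := hme a ha; have h2 := hme b hb
    omega
  have hrw : ∑ n ∈ T, (1 / (2 * ((n : ℝ) - 1)) - 1 / (2 * (n : ℝ)))
      = ∑ i ∈ T.image e, (1 / (2 * ((m : ℝ) + i - 1)) - 1 / (2 * ((m : ℝ) + i))) := by
    rw [Finset.sum_image hinj]
    apply Finset.sum_congr rfl
    intro n hn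
    have h := hme n hn
    have : ((m : ℝ) + (e n : ℝ)) = (n : ℝ) := by exact_mod_cast congrArg (Int.cast : ℤ → ℝ) h
    rw [this]
  rw [hrw]
  set K : ℕ := (T.image e).sup id + 1 with hK
  have hsub : T.image e ⊆ Finset.range K := by
    intro i hi
    rw [Finset.mem_range, hK]
    exact Nat.lt_succ_of_le (Finset.le_sup (f := id) hi)
  have hnonneg : ∀ i ∈ Finset.range K, 0 ≤ 1 / (2 * ((m : ℝ) + i - 1)) - 1 / (2 * ((m : ℝ) + i)) := by
    intro i _
    have h1 : (1 : ℝ) ≤ (m : ℝ) - 1 + i := by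
      have h0 : (0:ℝ) ≤ (i:ℝ) := Nat.cast_nonneg i
      linarith
    rw [sub_nonneg]
    apply div_le_div₀ (by norm_num) le_rfl (by linarith) (by linarith)
  calc ∑ i ∈ T.image e, (1 / (2 * ((m : ℝ) + i - 1)) - 1 / (2 * ((m : ℝ) + i)))
      ≤ ∑ i ∈ Finset.range K, (1 / (2 * ((m : ℝ) + i - 1)) - 1 / (2 * ((m : ℝ) + i))) :=
        Finset.sum_le_sum_of_subset_of_nonneg hsub (fun i hi _ => hnonneg i hi)
    _ = 1 / (2 * ((m : ℝ) - 1)) - 1 / (2 * ((m : ℝ) - 1 + K)) := by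
        have := Finset.sum_range_sub (fun i : ℕ => -(1 / (2 * ((m : ℝ) - 1 + i)))) K
        rw [show ∑ i ∈ Finset.range K, (1 / (2 * ((m : ℝ) + i - 1)) - 1 / (2 * ((m : ℝ) + i)))
          = ∑ i ∈ Finset.range K, (-(1 / (2 * ((m : ℝ) - 1 + (i + 1 : ℕ)))) - -(1 / (2 * ((m : ℝ) - 1 + i)))) from ?_, this]
        · push_cast; ring
        apply Finset.sum_congr rfl
        intro i _
        push_cast; ring
    _ ≤ 1 / (2 * ((m : ℝ) - 1)) := by
        have : (0:ℝ) ≤ 1 / (2 * ((m : ℝ) - 1 + K)) := by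
          apply div_nonneg (by norm_num)
          have : (0:ℝ) ≤ (K:ℝ) := Nat.cast_nonneg K
          linarith
        linarith

open scoped Classical

lemma phase_estimation_aux (M : ℕ) (hM : 0 < M) (y : ℝ)
    (m : ℤ) (hm : 1 < m) :
    ∑ k ∈ (Finset.range M).filter
        (fun k : ℕ => (m : ℝ) / (M : ℝ) < ⨅ j : ℤ, |y - (k : ℝ) / (M : ℝ) + (j : ℝ)|),
      (‖(1 / (M : ℂ)) * ∑ j ∈ Finset.range M,
          Complex.exp (2 * (Real.pi : ℂ) * Complex.I * (j : ℂ) *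
            ((y - (k : ℝ) / (M : ℝ) : ℝ) : ℂ))‖) ^ 2 ≤
      1 / (2 * ((m : ℝ) - 1)) := by
  have hMR : (0 : ℝ) < M := by exact_mod_cast hM
  have hmR : (1 : ℝ) < m := by exact_mod_cast hm
  set S := (Finset.range M).filter
      (fun k : ℕ => (m : ℝ) / (M : ℝ) < ⨅ j : ℤ, |y - (k : ℝ) / (M : ℝ) + (j : ℝ)|) with hS
  set σ : ℕ → ℝ := fun k => (M : ℝ) * (y - (k : ℝ) / (M : ℝ) - round (y - (k : ℝ) / (M : ℝ))) with hσ
  set nk : ℕ → ℤ := fun k => ⌊|σ k|⌋ with hnk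
  have hklt : ∀ k ∈ S, k < M := by
    intro k hk
    have h := (Finset.mem_filter.mp hk).1
    simpa using h
  have hDk : ∀ k ∈ S, (m : ℝ) / (M : ℝ)
      < |y - (k : ℝ) / (M : ℝ) - round (y - (k : ℝ) / (M : ℝ))| := by
    intro k hk
    have h := (Finset.mem_filter.mp hk).2
    rwa [iInf_abs_add_int] at h
  have hσabs : ∀ k ∈ S, (m : ℝ) < |σ k| := by
    intro k hk
    have h := hDk k hk
    have h2 := (div_lt_iff₀ hMR).mp h
    simp only [hσ]
    rw [abs_mul, abs_of_pos hMR]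
    linarith
  have hnk_ge : ∀ k ∈ S, m ≤ nk k := by
    intro k hk
    exact Int.le_floor.mpr (hσabs k hk).le
  -- differences of σ are nonzero integers
  have hdiff : ∀ k1 k2 : ℕ, k1 < M → k2 < M → k1 ≠ k2 →
      ∃ z : ℤ, z ≠ 0 ∧ σ k1 - σ k2 = (z : ℝ) := by
    intro k1 k2 h1 h2 hne
    set r1 : ℤ := round (y - (k1 : ℝ) / (M : ℝ)) with hr1
    set r2 : ℤ := round (y - (k2 : ℝ) / (M : ℝ)) with hr2
    refine ⟨(k2 : ℤ) - k1 + (M : ℤ) * (r2 - r1), ?_, ?_⟩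
    · intro h0
      set d : ℤ := r2 - r1 with hd
      have he : (k1 : ℤ) - k2 = (M : ℤ) * d := by linarith [h0]
      have hdne : d ≠ 0 := by
        intro h
        rw [h, mul_zero] at he
        have : (k1 : ℤ) = k2 := by omega
        exact hne (by exact_mod_cast this)
      have hge : (M : ℤ) ≤ |(M : ℤ) * d| := by
        rw [abs_mul, abs_of_nonneg (by positivity : (0:ℤ) ≤ (M:ℤ))]
        nlinarith [Int.one_le_abs hdne]
      have hlt : |(k1 : ℤ) - k2| < M := abs_lt.mpr ⟨by omega, by omega⟩
      rw [← he] at hge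
      exact absurd (lt_of_le_of_lt hge hlt) (lt_irrefl _)
    · have hMne : (M : ℝ) ≠ 0 := ne_of_gt hMR
      simp only [hσ]
      rw [← hr1, ← hr2]
      push_cast
      field_simp
      ring
  -- at most two outcomes per floor value
  have hfiber : ∀ n : ℤ, (S.filter (fun k => nk k = n)).card ≤ 2 := by
    intro n
    by_contra hcard
    push_neg at hcard
    obtain ⟨a, b, c, ha, hb, hc, hab, hac, hbc⟩ := Finset.two_lt_card_iff.mp hcard
    have key : ∀ u v : ℕ, u ∈ S.filter (fun k => nk k = n) →
        v ∈ S.filter (fun k => nk k = n) → u ≠ v → ¬ (0 < σ u ↔ 0 < σ v) := by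
      intro u v hu hv huv hsign
      have huS := (Finset.mem_filter.mp hu).1
      have hvS := (Finset.mem_filter.mp hv).1
      have hun : nk u = n := (Finset.mem_filter.mp hu).2
      have hvn : nk v = n := (Finset.mem_filter.mp hv).2
      simp only [hnk] at hun hvn
      have hnu1 : (n : ℝ) ≤ |σ u| := by
        have h := Int.floor_le |σ u|; rw [hun] at h; exact h
      have hnu2 : |σ u| < (n : ℝ) + 1 := by
        have h := Int.lt_floor_add_one |σ u|; rw [hun] at h; exact h
      have hnv1 : (n : ℝ) ≤ |σ v| := by
        have h := Int.floor_le |σ v|; rw [hvn] at h; exact h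
      have hnv2 : |σ v| < (n : ℝ) + 1 := by
        have h := Int.lt_floor_add_one |σ v|; rw [hvn] at h; exact h
      have hu0 : σ u ≠ 0 := by
        intro h
        have := hσabs u huS
        rw [h, abs_zero] at this
        linarith
      have hv0 : σ v ≠ 0 := by
        intro h
        have := hσabs v hvS
        rw [h, abs_zero] at this
        linarith
      obtain ⟨z, hz0, hz⟩ := hdiff u v (hklt u huS) (hklt v hvS) huv
      have h1z : (1 : ℝ) ≤ |(z : ℝ)| := by exact_mod_cast Int.one_le_abs hz0
      have hlt1 : |σ u - σ v| < 1 := by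
        rcases lt_or_gt_of_ne hu0 with hus | hus
        · have hvs : σ v < 0 := by
            rcases lt_or_gt_of_ne hv0 with h | h
            · exact h
            · exact absurd (hsign.mpr h) (not_lt.mpr hus.le)
          rw [abs_of_neg hus] at hnu1 hnu2
          rw [abs_of_neg hvs] at hnv1 hnv2
          rw [abs_sub_lt_iff]; constructor <;> linarith
        · have hvs : 0 < σ v := hsign.mp hus
          rw [abs_of_pos hus] at hnu1 hnu2
          rw [abs_of_pos hvs] at hnv1 hnv2
          rw [abs_sub_lt_iff]; constructor <;> linarith
      rw [hz] at hlt1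
      linarith
    rcases Decidable.em (0 < σ a ↔ 0 < σ b) with h | h
    · exact key a b ha hb hab h
    rcases Decidable.em (0 < σ a ↔ 0 < σ c) with h' | h'
    · exact key a c ha hc hac h'
    · exact key b c hb hc hbc (by tauto)
  -- termwise bound
  have hterm : ∀ k ∈ S,
      (‖(1 / (M : ℂ)) * ∑ j ∈ Finset.range M,
          Complex.exp (2 * (Real.pi : ℂ) * Complex.I * (j : ℂ) *
            ((y - (k : ℝ) / (M : ℝ) : ℝ) : ℂ))‖) ^ 2 ≤ 1 / (4 * ((nk k : ℝ)) ^ 2) := by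
    intro k hk
    have hD := hDk k hk
    have hDpos : 0 < |y - (k : ℝ) / (M : ℝ) - round (y - (k : ℝ) / (M : ℝ))| := by
      have : (0 : ℝ) < (m : ℝ) / (M : ℝ) := by positivity
      linarith
    refine (amp_bound M hM (y - (k : ℝ) / (M : ℝ)) hDpos).trans ?_
    have hMD : ((nk k : ℝ)) ≤ (M : ℝ) * |y - (k : ℝ) / (M : ℝ) - round (y - (k : ℝ) / (M : ℝ))| := by
      have h1 : ((nk k : ℝ)) ≤ |σ k| := Int.floor_le _
      have h2 : |σ k| = (M : ℝ) * |y - (k : ℝ) / (M : ℝ) - round (y - (k : ℝ) / (M : ℝ))| := by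
        simp only [hσ]
        rw [abs_mul, abs_of_pos hMR]
      linarith
    have hnkpos : (0 : ℝ) < ((nk k : ℝ)) := by
      have := hnk_ge k hk
      have : (m : ℝ) ≤ (nk k : ℝ) := by exact_mod_cast this
      linarith
    apply one_div_le_one_div_of_le (by positivity)
    nlinarith
  refine (Finset.sum_le_sum hterm).trans ?_
  rw [← Finset.sum_fiberwise_of_maps_to (fun k hk => Finset.mem_image_of_mem nk hk)
    (fun k => 1 / (4 * ((nk k : ℝ)) ^ 2))]
  have hstep : ∀ n ∈ S.image nk,
      ∑ k ∈ S.filter (fun k => nk k = n), 1 / (4 * ((nk k : ℝ)) ^ 2) ≤ 1 / (2 * (n : ℝ) ^ 2) := by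
    intro n hn
    obtain ⟨k0, hk0, hk0n⟩ := Finset.mem_image.mp hn
    have hnm : m ≤ n := hk0n ▸ hnk_ge k0 hk0
    have hnR : (2 : ℝ) ≤ (n : ℝ) := by exact_mod_cast (by omega : (2:ℤ) ≤ n)
    have hcongr : ∑ k ∈ S.filter (fun k => nk k = n), 1 / (4 * ((nk k : ℝ)) ^ 2)
        = (S.filter (fun k => nk k = n)).card * (1 / (4 * (n : ℝ) ^ 2)) := by
      rw [Finset.sum_congr rfl (fun k hk => by
        rw [(Finset.mem_filter.mp hk).2]), Finset.sum_const, nsmul_eq_mul]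
    rw [hcongr]
    have h2 := hfiber n
    calc ((S.filter (fun k => nk k = n)).card : ℝ) * (1 / (4 * (n : ℝ) ^ 2))
        ≤ 2 * (1 / (4 * (n : ℝ) ^ 2)) := by
          apply mul_le_mul_of_nonneg_right _ (by positivity)
          exact_mod_cast h2
      _ = 1 / (2 * (n : ℝ) ^ 2) := by
          field_simp
          ring
  refine (Finset.sum_le_sum hstep).trans ?_
  apply telescope_sum m hm
  intro n hn
  obtain ⟨k, hk, rfl⟩ := Finset.mem_image.mp hn
  exact hnk_ge k hk

/-- **Corollary 2.7(iv)** of Chen–Diao: the total probability of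
phase-estimation outcomes `k` whose circle distance from the true phase `y`
exceeds `m/M` is at most `1/(2(m−1))`.  Here
`α_k(y) = (1/M)·∑_{j<M} e^{2πij(y−k/M)}` and the circle distance is
`d(y₁,y₂) = min_{j∈ℤ} |y₁−y₂+j|`. -/
theorem phase_estimation_far_outcomes_probability (M : ℕ) (hM : 0 < M) (y : ℝ)
    (m : ℤ) (hm : 1 < m) :
    ∑ k ∈ (Finset.range M).filter
        (fun k => (m : ℝ) / (M : ℝ) < ⨅ j : ℤ, |y - (k : ℝ) / (M : ℝ) + (j : ℝ)|),
      (‖(1 / (M : ℂ)) * ∑ j ∈ Finset.range M,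
          Complex.exp (2 * (Real.pi : ℂ) * Complex.I * (j : ℂ) *
            ((y - (k : ℝ) / (M : ℝ) : ℝ) : ℂ))‖) ^ 2 ≤
      1 / (2 * ((m : ℝ) - 1)) := by
  have hbind : (do let a ← Finset.range M; pure ((a:ℝ)) : Finset ℝ)
      = Finset.image (fun a : ℕ => (a:ℝ)) (Finset.range M) := Finset.sup_singleton_apply _ _
  rw [hbind, Finset.filter_image,
    Finset.sum_image (fun a _ b _ h => by exact_mod_cast h)]
  exact phase_estimation_aux M hM y m hm
end

section
/- Let A₁, …, Aₙ be finite sets of elements of some type (n ≥ 1), let T be a finite set with T ⊆ A₁ ∪ … ∪ Aₙ, and assume basic confidence: Aᵢ ∩ T ≠ ∅ for every i = 1, …, n. Let α₁, …, αₙ be positive reals with ∑_{i=1}^n αᵢ = 1. For each element w of A₁ ∪ … ∪ Aₙ set W(w) = ∑_{i : w ∈ Aᵢ} αᵢ, let ν = (∑_{w ∈ A₁∪…∪Aₙ} W(w)²)^{1/2}, and let y = (∑_{w ∈ T} W(w)²)^{1/2} / ν. Then y ≥ 1/(√n · √|A₁ ∪ … ∪ Aₙ|); consequently, for every E > 0 the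 time T = π/(2Ey) satisfies T ≤ (π·√n/(2E))·√|A₁ ∪ … ∪ Aₙ|. -/
open Finset

/-- **Theorem 3.1** of Chen–Diao: under basic confidence (each information set
`Aᵢ` meets the target set `𝒯`), the overlap `y` of the initial state with the
target subspace satisfies `y ≥ 1/(√n·√(l+R))`, where `l+R = |A₁ ∪ … ∪ Aₙ|`;
consequently the search time `T = π/(2Ey)` is at most `(π√n/(2E))·√(l+R)`. -/

theorem basic_confidence_overlap_lower_bound {α : Type*} [DecidableEq α]
    {n : ℕ} (hn : 1 ≤ n)
    (A : Fin n → Finset α) (T : Finset α)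
    (hT : T ⊆ Finset.univ.biUnion A)
    (hbc : ∀ i, (A i ∩ T).Nonempty)
    (c : Fin n → ℝ) (hc : ∀ i, 0 < c i) (hcsum : ∑ i, c i = 1)
    (W : α → ℝ)
    (hW : ∀ w, W w = ∑ i ∈ Finset.univ.filter (fun i => w ∈ A i), c i)
    (ν y : ℝ)
    (hν : ν = Real.sqrt (∑ w ∈ Finset.univ.biUnion A, W w ^ 2))
    (hy : y = Real.sqrt (∑ w ∈ T, W w ^ 2) / ν) :
    1 / (Real.sqrt n * Real.sqrt ((Finset.univ.biUnion A).card : ℝ)) ≤ y ∧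
    ∀ E : ℝ, 0 < E →
      Real.pi / (2 * E * y) ≤
        Real.pi * Real.sqrt n / (2 * E) * Real.sqrt ((Finset.univ.biUnion A).card : ℝ) := by
  set U := Finset.univ.biUnion A with hU
  set N : ℕ := U.card with hN
  have hS : (0:ℝ) < ∑ i, c i ^ 2 :=
    Finset.sum_pos (fun i _ => pow_pos (hc i) 2) ⟨⟨0, hn⟩, Finset.mem_univ _⟩
  -- lower bound on the target sum
  have hTlow : (∑ i, c i ^ 2) ≤ ∑ w ∈ T, W w ^ 2 := by
    have swap : ∑ w ∈ T, ∑ i ∈ Finset.univ.filter (fun i => w ∈ A i), c i ^ 2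
        = ∑ i, ((T.filter (fun w => w ∈ A i)).card : ℝ) * c i ^ 2 := by
      simp_rw [Finset.sum_filter]
      rw [Finset.sum_comm]
      refine Finset.sum_congr rfl fun i _ => ?_
      rw [← Finset.sum_filter, Finset.sum_const, nsmul_eq_mul]
    calc (∑ i, c i ^ 2)
        ≤ ∑ i, ((T.filter (fun w => w ∈ A i)).card : ℝ) * c i ^ 2 := by
          refine Finset.sum_le_sum fun i _ => ?_
          have hne : (T.filter (fun w => w ∈ A i)).Nonempty := by
            obtain ⟨x, hx⟩ := hbc i
            rw [Finset.mem_inter] at hx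
            exact ⟨x, Finset.mem_filter.2 ⟨hx.2, hx.1⟩⟩
          have h1 : (1:ℝ) ≤ ((T.filter (fun w => w ∈ A i)).card : ℝ) := by
            exact_mod_cast Finset.card_pos.2 hne
          nlinarith [sq_nonneg (c i), pow_pos (hc i) 2]
      _ = ∑ w ∈ T, ∑ i ∈ Finset.univ.filter (fun i => w ∈ A i), c i ^ 2 := swap.symm
      _ ≤ ∑ w ∈ T, W w ^ 2 := by
          refine Finset.sum_le_sum fun w _ => ?_
          rw [hW]
          exact Finset.sum_sq_le_sq_sum_of_nonneg fun i _ => (hc i).le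
  -- upper bound on the full sum
  have hUup : (∑ w ∈ U, W w ^ 2) ≤ (n : ℝ) * N * ∑ i, c i ^ 2 := by
    have step1 : ∀ w ∈ U, W w ^ 2 ≤ (n : ℝ) * ∑ i ∈ Finset.univ.filter (fun i => w ∈ A i), c i ^ 2 := by
      intro w _
      rw [hW]
      calc (∑ i ∈ Finset.univ.filter (fun i => w ∈ A i), c i) ^ 2
          ≤ ((Finset.univ.filter (fun i => w ∈ A i)).card : ℝ) *
              ∑ i ∈ Finset.univ.filter (fun i => w ∈ A i), c i ^ 2 :=
            sq_sum_le_card_mul_sum_sq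
        _ ≤ (n : ℝ) * ∑ i ∈ Finset.univ.filter (fun i => w ∈ A i), c i ^ 2 := by
            refine mul_le_mul_of_nonneg_right ?_
              (Finset.sum_nonneg fun i _ => sq_nonneg _)
            exact_mod_cast (Finset.card_filter_le _ _).trans_eq (by simp)
    have swap : ∑ w ∈ U, ∑ i ∈ Finset.univ.filter (fun i => w ∈ A i), c i ^ 2
        = ∑ i, ((U.filter (fun w => w ∈ A i)).card : ℝ) * c i ^ 2 := by
      simp_rw [Finset.sum_filter]
      rw [Finset.sum_comm]
      refine Finset.sum_congr rfl fun i _ => ?_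
      rw [← Finset.sum_filter, Finset.sum_const, nsmul_eq_mul]
    calc (∑ w ∈ U, W w ^ 2)
        ≤ ∑ w ∈ U, (n : ℝ) * ∑ i ∈ Finset.univ.filter (fun i => w ∈ A i), c i ^ 2 :=
          Finset.sum_le_sum step1
      _ = (n : ℝ) * ∑ i, ((U.filter (fun w => w ∈ A i)).card : ℝ) * c i ^ 2 := by
          rw [← Finset.mul_sum, swap]
      _ ≤ (n : ℝ) * ∑ i, (N : ℝ) * c i ^ 2 := by
          refine mul_le_mul_of_nonneg_left (Finset.sum_le_sum fun i _ => ?_) (by positivity)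
          refine mul_le_mul_of_nonneg_right ?_ (sq_nonneg _)
          exact_mod_cast Finset.card_filter_le _ _
      _ = (n : ℝ) * N * ∑ i, c i ^ 2 := by rw [← Finset.mul_sum, mul_assoc]
  have ha : (0:ℝ) < ∑ w ∈ T, W w ^ 2 := lt_of_lt_of_le hS hTlow
  have hb : (0:ℝ) < ∑ w ∈ U, W w ^ 2 := by
    refine lt_of_lt_of_le ha (Finset.sum_le_sum_of_subset_of_nonneg hT ?_)
    intro i _ _; exact sq_nonneg _
  have hNpos : (0:ℕ) < N := by
    obtain ⟨x, hx⟩ := hbc ⟨0, hn⟩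
    rw [Finset.mem_inter] at hx
    exact Finset.card_pos.2 ⟨x, Finset.mem_biUnion.2 ⟨_, Finset.mem_univ _, hx.1⟩⟩
  have hνpos : 0 < ν := by rw [hν]; exact Real.sqrt_pos.2 hb
  have hxpos : (0:ℝ) < Real.sqrt n * Real.sqrt N := by
    apply mul_pos <;> exact Real.sqrt_pos.2 (by exact_mod_cast Nat.pos_of_ne_zero (by omega))
  have key : 1 / (Real.sqrt n * Real.sqrt N) ≤ y := by
    rw [hy, hν, div_le_div_iff₀ hxpos (Real.sqrt_pos.2 hb), one_mul]
    have : (∑ w ∈ U, W w ^ 2) ≤ ((n:ℝ) * N) * ∑ w ∈ T, W w ^ 2 := by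
      calc (∑ w ∈ U, W w ^ 2) ≤ (n : ℝ) * N * ∑ i, c i ^ 2 := hUup
        _ ≤ ((n:ℝ) * N) * ∑ w ∈ T, W w ^ 2 := by
            exact mul_le_mul_of_nonneg_left hTlow (by positivity)
    calc Real.sqrt (∑ w ∈ U, W w ^ 2)
        ≤ Real.sqrt (((n:ℝ) * N) * ∑ w ∈ T, W w ^ 2) := Real.sqrt_le_sqrt this
      _ = Real.sqrt (∑ w ∈ T, W w ^ 2) * (Real.sqrt n * Real.sqrt N) := by
          rw [Real.sqrt_mul (by positivity), Real.sqrt_mul (by positivity)]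
          ring
  refine ⟨key, fun E hE => ?_⟩
  have hypos : 0 < y := lt_of_lt_of_le (by positivity) key
  have hrec : 1 / y ≤ Real.sqrt n * Real.sqrt N := by
    rw [div_le_iff₀ hypos]
    calc (1:ℝ) = (1 / (Real.sqrt n * Real.sqrt N)) * (Real.sqrt n * Real.sqrt N) := by
          field_simp
      _ ≤ y * (Real.sqrt n * Real.sqrt N) := by
          exact mul_le_mul_of_nonneg_right key hxpos.le
      _ = Real.sqrt n * Real.sqrt N * y := by ring
  have : Real.pi / (2 * E * y) = Real.pi / (2 * E) * (1 / y) := by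
    field_simp
  rw [this]
  calc Real.pi / (2 * E) * (1 / y)
      ≤ Real.pi / (2 * E) * (Real.sqrt n * Real.sqrt N) := by
        exact mul_le_mul_of_nonneg_left hrec (by positivity)
    _ = Real.pi * Real.sqrt n / (2 * E) * Real.sqrt N := by ring
end

section
/- Let A₁, …, Aₙ be finite sets of elements of some type (n ≥ 1), let T be a finite set with T ⊆ A₁ ∪ … ∪ Aₙ, assume Aᵢ ∩ T ≠ ∅ for every i (basic confidence), and let α₁, …, αₙ be positive reals with ∑_{i=1}^n αᵢ = 1. For each element w set W(w) = ∑_{i : w ∈ Aᵢ} αᵢ. Then ∑_{w ∈ T} W(w)² ≥ ∑_{i=1}^n αᵢ². -/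
open Finset

/-- **Inequality (3.7)** in the proof of Theorem 3.1 of Chen–Diao: under basic
confidence (each information set `Aᵢ` meets the target set `𝒯`), the squared
weight of the target set satisfies `∑_{w∈𝒯} W(w)² ≥ ∑ᵢ αᵢ²`. -/
theorem target_weight_lower_bound {α : Type*} [DecidableEq α]
    {n : ℕ} (hn : 1 ≤ n)
    (A : Fin n → Finset α) (T : Finset α)
    (hT : T ⊆ Finset.univ.biUnion A)
    (hbc : ∀ i, (A i ∩ T).Nonempty)
    (c : Fin n → ℝ) (hc : ∀ i, 0 < c i) (hcsum : ∑ i, c i = 1)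
    (W : α → ℝ)
    (hW : ∀ w, W w = ∑ i ∈ Finset.univ.filter (fun i => w ∈ A i), c i) :
    ∑ i, c i ^ 2 ≤ ∑ w ∈ T, W w ^ 2 := by
  classical
  choose f hf using hbc
  have hfA : ∀ i, f i ∈ A i := fun i => (Finset.mem_inter.mp (hf i)).1
  have hfT : ∀ i, f i ∈ T := fun i => (Finset.mem_inter.mp (hf i)).2
  have key : ∑ i, c i ^ 2 =
      ∑ w ∈ T, ∑ i ∈ Finset.univ.filter (fun i => f i = w), c i ^ 2 := by
    rw [Finset.sum_fiberwise_of_maps_to (fun i _ => hfT i)]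
  rw [key]
  refine Finset.sum_le_sum fun w hw => ?_
  have h1 : ∑ i ∈ Finset.univ.filter (fun i => f i = w), c i ^ 2 ≤
      (∑ i ∈ Finset.univ.filter (fun i => f i = w), c i) ^ 2 :=
    Finset.sum_sq_le_sq_sum_of_nonneg (fun i _ => (hc i).le)
  refine h1.trans (pow_le_pow_left₀ (Finset.sum_nonneg fun i _ => (hc i).le) ?_ 2)
  rw [hW]
  refine Finset.sum_le_sum_of_subset_of_nonneg ?_ (fun i _ _ => (hc i).le)
  intro i hi
  simp only [Finset.mem_filter, Finset.mem_univ, true_and] at hi ⊢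
  exact hi ▸ hfA i
end

section
/- Let A₁, …, Aₙ be pairwise disjoint finite sets of elements of some type (n ≥ 1), let T be a finite set with T ⊆ A₁ ∪ … ∪ Aₙ, assume Aᵢ ∩ T ≠ ∅ for every i (basic confidence), and let α₁, …, αₙ be positive reals with ∑_{i=1}^n αᵢ = 1. For each element w set W(w) = ∑_{i : w ∈ Aᵢ} αᵢ, let ν = (∑_{w ∈ A₁∪…∪Aₙ} W(w)²)^{1/2}, and let y = (∑_{w ∈ T} W(w)²)^{1/2} / ν. Then y ≥ 1/√|A₁ ∪ … ∪ Aₙ|; consequently, for every E > 0 the time T = π/(2Ey) satisfies T ≤ (π/(2E))·√|A₁ ∪ … ∪ Aₙ|. -/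
open Finset

/-- **Corollary 3.4** of Chen–Diao (with Remark 3.3(ii)): when the information
sets are pairwise disjoint and basic confidence holds, `y ≥ 1/√(l+R)` where
`l+R = |A₁ ∪ … ∪ Aₙ|`, so the search time `T = π/(2Ey)` is at most
`(π/(2E))·√(l+R)`, independently of `n`. -/
theorem disjoint_basic_confidence_overlap_bound {α : Type*} [DecidableEq α]
    {n : ℕ} (hn : 1 ≤ n)
    (A : Fin n → Finset α)
    (hdisj : ∀ i j, i ≠ j → Disjoint (A i) (A j))
    (T : Finset α)
    (hT : T ⊆ Finset.univ.biUnion A)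
    (hbc : ∀ i, (A i ∩ T).Nonempty)
    (c : Fin n → ℝ) (hc : ∀ i, 0 < c i) (hcsum : ∑ i, c i = 1)
    (W : α → ℝ)
    (hW : ∀ w, W w = ∑ i ∈ Finset.univ.filter (fun i => w ∈ A i), c i)
    (ν y : ℝ)
    (hν : ν = Real.sqrt (∑ w ∈ Finset.univ.biUnion A, W w ^ 2))
    (hy : y = Real.sqrt (∑ w ∈ T, W w ^ 2) / ν) :
    1 / Real.sqrt ((Finset.univ.biUnion A).card : ℝ) ≤ y ∧
    ∀ E : ℝ, 0 < E →
      Real.pi / (2 * E * y) ≤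
        Real.pi / (2 * E) * Real.sqrt ((Finset.univ.biUnion A).card : ℝ) := by
  classical
  have hWA : ∀ i, ∀ w ∈ A i, W w = c i := by
    intro i w hw
    rw [hW]
    have hfil : Finset.univ.filter (fun j => w ∈ A j) = {i} := by
      ext j
      simp only [mem_filter, mem_univ, true_and, mem_singleton]
      constructor
      · intro hj
        by_contra h
        exact Finset.disjoint_left.mp (hdisj j i h) hj hw
      · rintro rfl; exact hw
    rw [hfil, Finset.sum_singleton]
  set U := Finset.univ.biUnion A with hU
  set ST := ∑ t ∈ T, W t ^ 2 with hST
  set SU := ∑ w ∈ U, W w ^ 2 with hSU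
  have hkey : ∀ w ∈ U, W w ^ 2 ≤ ST := by
    intro w hw
    rw [hU, mem_biUnion] at hw
    obtain ⟨i, _, hwi⟩ := hw
    obtain ⟨t, ht⟩ := hbc i
    rw [mem_inter] at ht
    have heq : W w ^ 2 = W t ^ 2 := by rw [hWA i w hwi, hWA i t ht.1]
    rw [heq]
    exact Finset.single_le_sum (f := fun t => W t ^ 2) (fun t _ => sq_nonneg _) ht.2
  obtain ⟨t0, ht0⟩ := hbc ⟨0, hn⟩
  rw [mem_inter] at ht0
  have ht0U : t0 ∈ U := mem_biUnion.mpr ⟨⟨0, hn⟩, mem_univ _, ht0.1⟩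
  have hWt0 : 0 < W t0 ^ 2 := by rw [hWA _ t0 ht0.1]; exact pow_pos (hc _) 2
  have hSTpos : 0 < ST := lt_of_lt_of_le hWt0
    (Finset.single_le_sum (f := fun t => W t ^ 2) (fun t _ => sq_nonneg _) ht0.2)
  have hSUpos : 0 < SU := lt_of_lt_of_le hWt0
    (Finset.single_le_sum (f := fun w => W w ^ 2) (fun w _ => sq_nonneg _) ht0U)
  have hcard : 0 < (U.card : ℝ) := by
    exact_mod_cast Finset.card_pos.mpr ⟨t0, ht0U⟩
  have hSU_le : SU ≤ (U.card : ℝ) * ST := by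
    calc SU ≤ ∑ _w ∈ U, ST := Finset.sum_le_sum hkey
    _ = (U.card : ℝ) * ST := by rw [Finset.sum_const, nsmul_eq_mul]
  have hsqc : 0 < Real.sqrt (U.card : ℝ) := Real.sqrt_pos.mpr hcard
  have hsqT : 0 < Real.sqrt ST := Real.sqrt_pos.mpr hSTpos
  have hsqU : 0 < Real.sqrt SU := Real.sqrt_pos.mpr hSUpos
  have hνpos : 0 < ν := by rw [hν]; exact hsqU
  have hybound : 1 / Real.sqrt (U.card : ℝ) ≤ y := by
    rw [hy, hν]
    rw [div_le_div_iff₀ hsqc hsqU]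
    have : Real.sqrt SU ≤ Real.sqrt ((U.card : ℝ) * ST) := Real.sqrt_le_sqrt hSU_le
    rw [Real.sqrt_mul hcard.le] at this
    linarith
  have hypos : 0 < y := lt_of_lt_of_le (by positivity) hybound
  refine ⟨hybound, fun E hE => ?_⟩
  have hinv : 1 / y ≤ Real.sqrt (U.card : ℝ) := by
    rw [div_le_iff₀ hypos]
    have := mul_le_mul_of_nonneg_left hybound hsqc.le
    rw [mul_one_div, div_self hsqc.ne'] at this
    linarith
  have h2E : 0 < 2 * E := by linarith
  have : Real.pi / (2 * E * y) = Real.pi / (2 * E) * (1 / y) := by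
    field_simp
  rw [this]
  exact mul_le_mul_of_nonneg_left hinv (by positivity)
end

section
/- Let A₁, …, Aₙ be finite sets of elements of some type (n ≥ 1), let T ⊆ A₁ ∪ … ∪ Aₙ with Aᵢ ∩ T ≠ ∅ for every i (basic confidence), let α₁, …, αₙ be positive reals with ∑αᵢ = 1, define W(w) = ∑_{i : w ∈ Aᵢ} αᵢ, ν = (∑_{w ∈ A₁∪…∪Aₙ} W(w)²)^{1/2}, and y = (∑_{w∈T} W(w)²)^{1/2}/ν. Suppose moreover that |A₁ ∪ … ∪ Aₙ| ≤ C·N^δ for reals C > 0, N ≥ 1, δ > 0. Then for every E > 0, the time T = π/(2Ey) satisfies T ≤ (π/(2E))·√(n·C)·N^{δ/2}. -/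
open Finset

/-- **Corollary 3.2** of Chen–Diao: under basic confidence, if the union of
the information sets has cardinality `l+R ≤ C·N^δ`, then for every `E > 0` the
search time `T = π/(2Ey)` is at most `(π/(2E))·√(nC)·N^{δ/2}`, i.e. the first
item is found in time `O(√n·N^{δ/2})`. -/
theorem basic_confidence_search_time_bound {α : Type*} [DecidableEq α]
    {n : ℕ} (hn : 1 ≤ n)
    (A : Fin n → Finset α) (T : Finset α)
    (hT : T ⊆ Finset.univ.biUnion A)
    (hbc : ∀ i, (A i ∩ T).Nonempty)
    (c : Fin n → ℝ) (hc : ∀ i, 0 < c i) (hcsum : ∑ i, c i = 1)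
    (W : α → ℝ)
    (hW : ∀ w, W w = ∑ i ∈ Finset.univ.filter (fun i => w ∈ A i), c i)
    (ν y : ℝ)
    (hν : ν = Real.sqrt (∑ w ∈ Finset.univ.biUnion A, W w ^ 2))
    (hy : y = Real.sqrt (∑ w ∈ T, W w ^ 2) / ν)
    (C N δ : ℝ) (hC : 0 < C) (hN : 1 ≤ N) (hδ : 0 < δ)
    (hcard : ((Finset.univ.biUnion A).card : ℝ) ≤ C * N ^ δ) :
    ∀ E : ℝ, 0 < E →
      Real.pi / (2 * E * y) ≤
        Real.pi / (2 * E) * Real.sqrt ((n : ℝ) * C) * N ^ (δ / 2) := by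
  intro E hE
  have hWnn : ∀ w, 0 ≤ W w := fun w => by
    rw [hW]; exact Finset.sum_nonneg fun i _ => (hc i).le
  have hWle : ∀ w, W w ≤ 1 := fun w => by
    rw [hW, ← hcsum]
    exact Finset.sum_le_sum_of_subset_of_nonneg (Finset.filter_subset _ _)
      (fun i _ _ => (hc i).le)
  have hTsum_nn : (0:ℝ) ≤ ∑ w ∈ T, W w ^ 2 :=
    Finset.sum_nonneg fun w _ => sq_nonneg _
  have hUsum_nn : (0:ℝ) ≤ ∑ w ∈ Finset.univ.biUnion A, W w ^ 2 :=
    Finset.sum_nonneg fun w _ => sq_nonneg _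
  have hνsq : ν ^ 2 = ∑ w ∈ Finset.univ.biUnion A, W w ^ 2 := by
    rw [hν]; exact Real.sq_sqrt hUsum_nn
  have hNpos : (0:ℝ) < N ^ δ := Real.rpow_pos_of_pos (lt_of_lt_of_le one_pos hN) δ
  have hνsq_le : ν ^ 2 ≤ C * N ^ δ := by
    calc ν ^ 2 = ∑ w ∈ Finset.univ.biUnion A, W w ^ 2 := hνsq
      _ ≤ ∑ _w ∈ Finset.univ.biUnion A, (1:ℝ) :=
          Finset.sum_le_sum fun w _ => by nlinarith [hWnn w, hWle w]
      _ = ((Finset.univ.biUnion A).card : ℝ) := by simp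
      _ ≤ C * N ^ δ := hcard
  -- ∑ cᵢ² ≤ ∑_{w∈T} W w ²
  have key : ∑ i, c i ^ 2 ≤ ∑ w ∈ T, W w ^ 2 := by
    calc ∑ i, c i ^ 2
        ≤ ∑ i, ∑ w ∈ T.filter (· ∈ A i), c i ^ 2 := by
          apply Finset.sum_le_sum; intro i _
          obtain ⟨w, hw⟩ := hbc i
          rw [Finset.mem_inter] at hw
          have hwm : w ∈ T.filter (· ∈ A i) := Finset.mem_filter.mpr ⟨hw.2, hw.1⟩
          rw [Finset.sum_const, nsmul_eq_mul]
          have h1 : 1 ≤ ((T.filter (· ∈ A i)).card : ℝ) := by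
            exact_mod_cast Finset.card_pos.mpr ⟨w, hwm⟩
          nlinarith [sq_nonneg (c i)]
      _ = ∑ w ∈ T, ∑ i ∈ Finset.univ.filter (fun i => w ∈ A i), c i ^ 2 := by
          simp only [Finset.sum_filter]
          exact Finset.sum_comm
      _ ≤ ∑ w ∈ T, W w ^ 2 := by
          apply Finset.sum_le_sum; intro w _
          rw [hW]
          exact Finset.sum_sq_le_sq_sum_of_nonneg fun i _ => (hc i).le
  have hcs : (1:ℝ) ≤ (n : ℝ) * ∑ i, c i ^ 2 := by
    have := sq_sum_le_card_mul_sum_sq (s := (Finset.univ : Finset (Fin n))) (f := c)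
    simpa [hcsum] using this
  have hnpos : (0:ℝ) < (n : ℝ) := by exact_mod_cast hn
  have hn1 : (1:ℝ) ≤ (n : ℝ) := by exact_mod_cast hn
  have hTsum_ge : 1 / (n : ℝ) ≤ ∑ w ∈ T, W w ^ 2 := by
    rw [div_le_iff₀ hnpos]
    nlinarith [mul_le_mul_of_nonneg_left key hnpos.le]
  have hνsq_pos : 0 < ν ^ 2 := by
    have hsub : ∑ w ∈ T, W w ^ 2 ≤ ∑ w ∈ Finset.univ.biUnion A, W w ^ 2 :=
      Finset.sum_le_sum_of_subset_of_nonneg hT fun w _ _ => sq_nonneg _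
    have : 0 < ∑ w ∈ T, W w ^ 2 := lt_of_lt_of_le (by positivity) hTsum_ge
    rw [hνsq]; linarith
  have hνpos : 0 < ν := by
    have := Real.sqrt_nonneg (∑ w ∈ Finset.univ.biUnion A, W w ^ 2)
    rw [← hν] at this
    rcases this.lt_or_eq with h | h
    · exact h
    · exfalso; rw [← h] at hνsq_pos; simp at hνsq_pos
  have hypos : 0 < y := by
    rw [hy]
    apply div_pos _ hνpos
    exact Real.sqrt_pos.mpr (lt_of_lt_of_le (by positivity) hTsum_ge)
  have hysq : y ^ 2 = (∑ w ∈ T, W w ^ 2) / ν ^ 2 := by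
    rw [hy, div_pow, Real.sq_sqrt hTsum_nn]
  have hysq_ge : 1 / ((n : ℝ) * (C * N ^ δ)) ≤ y ^ 2 := by
    rw [hysq, div_le_div_iff₀ (by positivity) hνsq_pos]
    have h1 : 1 ≤ (∑ w ∈ T, W w ^ 2) * (n : ℝ) := by
      rw [div_le_iff₀ hnpos] at hTsum_ge; linarith
    nlinarith [mul_le_mul_of_nonneg_right h1 (mul_pos hC hNpos).le]
  -- identify √(nC)·N^{δ/2} with √(n·C·N^δ)
  have hNs : N ^ (δ / 2) = Real.sqrt (N ^ δ) := by
    rw [Real.sqrt_eq_rpow, ← Real.rpow_mul (by linarith : (0:ℝ) ≤ N)]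
    congr 1; ring
  have hsqrt_eq : Real.sqrt ((n : ℝ) * C) * N ^ (δ / 2)
      = Real.sqrt ((n : ℝ) * (C * N ^ δ)) := by
    rw [hNs, ← Real.sqrt_mul (by positivity), mul_assoc]
  have hM : 0 < (n : ℝ) * (C * N ^ δ) := by positivity
  have h1le : 1 ≤ y * Real.sqrt ((n : ℝ) * (C * N ^ δ)) := by
    have hs : (Real.sqrt ((n : ℝ) * (C * N ^ δ))) ^ 2 = (n : ℝ) * (C * N ^ δ) :=
      Real.sq_sqrt hM.le
    have hsnn := Real.sqrt_nonneg ((n : ℝ) * (C * N ^ δ))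
    have : 1 ≤ (y * Real.sqrt ((n : ℝ) * (C * N ^ δ))) ^ 2 := by
      rw [mul_pow, hs]
      rw [div_le_iff₀ hM] at hysq_ge
      linarith
    nlinarith [this, mul_nonneg hypos.le hsnn]
  have hinv : 1 / y ≤ Real.sqrt ((n : ℝ) * (C * N ^ δ)) := by
    rw [div_le_iff₀ hypos]
    linarith [h1le, mul_comm y (Real.sqrt ((n : ℝ) * (C * N ^ δ)))]
  calc Real.pi / (2 * E * y) = Real.pi / (2 * E) * (1 / y) := by
        field_simp
    _ ≤ Real.pi / (2 * E) * Real.sqrt ((n : ℝ) * (C * N ^ δ)) := by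
        apply mul_le_mul_of_nonneg_left hinv
        positivity
    _ = Real.pi / (2 * E) * Real.sqrt ((n : ℝ) * C) * N ^ (δ / 2) := by
        rw [mul_assoc, hsqrt_eq]
end
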